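/- arXiv:1907.04586 — 5 statements merged into one kernel-verified Lean document; each statement's English description precedes it below -/
import Mathlib

section
/- Let G be a chordal graph with a BFS-layering (V_0, V_1, …) and let i > 0. If C is a connected subgraph of the graph induced on the union of layers V_j with j > i, then the shadow S_i(C), defined as the set of vertices v ∈ V_i such that there is a path P from v to C with P ∩ V_i = {v}, induces a clique in G. -/
/-- A graph is chordal if every cycle of length at least 4 has a chord: two vertices of the
cycle that are adjacent in the graph by an edge not belonging to the cycle. -/
def IsChordal {V : Type*} (G : SimpleGraph V) : Prop :=
  ∀ ⦃u : V⦄ (w : G.Walk u u), w.IsCycle → 4 ≤ w.length →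
    ∃ x y : V, x ∈ w.support ∧ y ∈ w.support ∧ G.Adj x y ∧ s(x, y) ∉ w.edges

/-- With respect to the BFS-layering of `G` rooted at `r` (layer `V_i` is the set of vertices
at distance exactly `i` from `r`), the shadow `S_i(C)` of a subgraph `C` is the set of vertices
`v` in layer `i` admitting a path `P` from `v` to `C` whose only vertex in layer `i` is `v`. -/
def shadow {V : Type*} (G : SimpleGraph V) (r : V) (i : ℕ) (C : G.Subgraph) : Set V :=
  {v | G.dist r v = i ∧ ∃ c : V, c ∈ C.verts ∧ ∃ P : G.Walk v c,
    P.IsPath ∧ ∀ x ∈ P.support, G.dist r x = i → x = v}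

namespace ShadowAux

open SimpleGraph

variable {V : Type*} [DecidableEq V] {G : SimpleGraph V}

lemma edge_mem_of_length_one {a b : V} (w : G.Walk a b) (h : w.length = 1) :
    s(a, b) ∈ w.edges := by
  cases w with
  | nil => simp at h
  | cons hadj w' =>
    cases w' with
    | nil => simp
    | cons h2 w'' => simp [SimpleGraph.Walk.length_cons] at h

lemma dist_le_of_adj (hG : G.Connected) (r : V) {a b : V} (h : G.Adj a b) :
    G.dist r b ≤ G.dist r a + 1 := by
  have h1 := hG.dist_triangle (u := r) (v := a) (w := b)
  have h2 : G.dist a b = 1 := SimpleGraph.dist_eq_one_iff_adj.mpr h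
  omega

/-- Discrete intermediate value along a walk. -/
lemma exists_layer_vertex (hG : G.Connected) (r : V) (i : ℕ) :
    ∀ {a b : V} (w : G.Walk a b), G.dist r a ≤ i → i ≤ G.dist r b →
      ∃ x ∈ w.support, G.dist r x = i := by
  intro a b w
  induction w with
  | nil =>
    intro h1 h2
    exact ⟨_, SimpleGraph.Walk.start_mem_support _, le_antisymm h1 h2⟩
  | cons hadj w ih =>
    intro h1 h2
    rcases eq_or_lt_of_le h1 with he | hlt
    · exact ⟨_, SimpleGraph.Walk.start_mem_support _, he⟩
    · obtain ⟨x, hx, hxd⟩ := ih (by have := dist_le_of_adj hG r hadj; omega) h2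
      exact ⟨x, by rw [SimpleGraph.Walk.support_cons]; exact List.mem_cons_of_mem _ hx, hxd⟩

/-- A chord of a path can be used to shorten the path keeping the support inside
the old support. -/
lemma shorten {u v x y : V} (Q : G.Walk u v)
    (hx : x ∈ Q.support) (hy : y ∈ Q.support) (hadj : G.Adj x y)
    (he : s(x, y) ∉ Q.edges) :
    ∃ Q' : G.Walk u v, Q'.IsPath ∧ (∀ z ∈ Q'.support, z ∈ Q.support) ∧
      Q'.length < Q.length := by
  have hspec := Q.take_spec hx
  have hy' : y ∈ (Q.takeUntil x hx).support ∨ y ∈ (Q.dropUntil x hx).support := by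
    rw [← SimpleGraph.Walk.mem_support_append_iff, hspec]; exact hy
  have hlenQ : (Q.takeUntil x hx).length + (Q.dropUntil x hx).length = Q.length := by
    rw [← SimpleGraph.Walk.length_append, hspec]
  rcases hy' with hy1 | hy2
  · -- y occurs before x on `Q`
    have hspec1 := (Q.takeUntil x hx).take_spec hy1
    have hlen1 : ((Q.takeUntil x hx).takeUntil y hy1).length +
        ((Q.takeUntil x hx).dropUntil y hy1).length = (Q.takeUntil x hx).length := by
      rw [← SimpleGraph.Walk.length_append, hspec1]
    have hge2 : 2 ≤ ((Q.takeUntil x hx).dropUntil y hy1).length := by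
      rcases Nat.lt_or_ge ((Q.takeUntil x hx).dropUntil y hy1).length 2 with hlt | hge
      · have h01 : ((Q.takeUntil x hx).dropUntil y hy1).length = 0 ∨
            ((Q.takeUntil x hx).dropUntil y hy1).length = 1 := by omega
        rcases h01 with h | h
        · exact absurd (SimpleGraph.Walk.eq_of_length_eq_zero h) hadj.ne'
        · exfalso
          apply he
          have := edge_mem_of_length_one _ h
          rw [Sym2.eq_swap] at this
          exact (Q.edges_takeUntil_subset hx)
            (((Q.takeUntil x hx).edges_dropUntil_subset hy1) this)
      · exact hge
    refine ⟨(((Q.takeUntil x hx).takeUntil y hy1).append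
      (SimpleGraph.Walk.cons hadj.symm (Q.dropUntil x hx))).bypass,
      SimpleGraph.Walk.bypass_isPath _, ?_, ?_⟩
    · intro z hz
      have hz' := SimpleGraph.Walk.support_bypass_subset _ hz
      rw [SimpleGraph.Walk.mem_support_append_iff] at hz'
      rcases hz' with hz' | hz'
      · exact (Q.support_takeUntil_subset hx)
          (((Q.takeUntil x hx).support_takeUntil_subset hy1) hz')
      · rw [SimpleGraph.Walk.support_cons] at hz'
        rcases List.mem_cons.mp hz' with rfl | hz'
        · exact hy
        · exact Q.support_dropUntil_subset hx hz'
    · calc _ ≤ (((Q.takeUntil x hx).takeUntil y hy1).append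
            (SimpleGraph.Walk.cons hadj.symm (Q.dropUntil x hx))).length :=
          SimpleGraph.Walk.length_bypass_le _
        _ < Q.length := by
          rw [SimpleGraph.Walk.length_append, SimpleGraph.Walk.length_cons]
          omega
  · -- y occurs after x on `Q`
    have hspec2 := (Q.dropUntil x hx).take_spec hy2
    have hlen2 : ((Q.dropUntil x hx).takeUntil y hy2).length +
        ((Q.dropUntil x hx).dropUntil y hy2).length = (Q.dropUntil x hx).length := by
      rw [← SimpleGraph.Walk.length_append, hspec2]
    have hge2 : 2 ≤ ((Q.dropUntil x hx).takeUntil y hy2).length := by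
      rcases Nat.lt_or_ge ((Q.dropUntil x hx).takeUntil y hy2).length 2 with hlt | hge
      · have h01 : ((Q.dropUntil x hx).takeUntil y hy2).length = 0 ∨
            ((Q.dropUntil x hx).takeUntil y hy2).length = 1 := by omega
        rcases h01 with h | h
        · exact absurd (SimpleGraph.Walk.eq_of_length_eq_zero h) hadj.ne
        · exfalso
          apply he
          have := edge_mem_of_length_one _ h
          exact (Q.edges_dropUntil_subset hx)
            (((Q.dropUntil x hx).edges_takeUntil_subset hy2) this)
      · exact hge
    refine ⟨((Q.takeUntil x hx).append
      (SimpleGraph.Walk.cons hadj ((Q.dropUntil x hx).dropUntil y hy2))).bypass,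
      SimpleGraph.Walk.bypass_isPath _, ?_, ?_⟩
    · intro z hz
      have hz' := SimpleGraph.Walk.support_bypass_subset _ hz
      rw [SimpleGraph.Walk.mem_support_append_iff] at hz'
      rcases hz' with hz' | hz'
      · exact Q.support_takeUntil_subset hx hz'
      · rw [SimpleGraph.Walk.support_cons] at hz'
        rcases List.mem_cons.mp hz' with rfl | hz'
        · exact hx
        · exact Q.support_dropUntil_subset hx
            (((Q.dropUntil x hx).support_dropUntil_subset hy2) hz')
    · calc _ ≤ ((Q.takeUntil x hx).append
            (SimpleGraph.Walk.cons hadj ((Q.dropUntil x hx).dropUntil y hy2))).length :=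
          SimpleGraph.Walk.length_bypass_le _
        _ < Q.length := by
          rw [SimpleGraph.Walk.length_append, SimpleGraph.Walk.length_cons]
          omega

/-- Two internally disjoint paths between distinct non-adjacent vertices form a cycle. -/
lemma cycle_of_paths {u v : V} (Q R : G.Walk u v) (hQ : Q.IsPath) (hR : R.IsPath)
    (huv : u ≠ v) (hnadj : ¬ G.Adj u v)
    (hdisj : ∀ z, z ∈ Q.support → z ∈ R.support → z = u ∨ z = v) :
    (Q.append R.reverse).IsCycle := by
  have hedisj : ∀ e, e ∈ Q.edges → e ∈ R.edges → False := by
    intro e heQ heR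
    induction e with
    | h a b =>
      have hadj' := Q.adj_of_mem_edges heQ
      have ha1 := Q.fst_mem_support_of_mem_edges heQ
      have hb1 := Q.snd_mem_support_of_mem_edges heQ
      have ha2 := R.fst_mem_support_of_mem_edges heR
      have hb2 := R.snd_mem_support_of_mem_edges heR
      rcases hdisj a ha1 ha2 with rfl | rfl <;>
        rcases hdisj b hb1 hb2 with rfl | rfl
      · exact hadj'.ne rfl
      · exact hnadj hadj'
      · exact hnadj hadj'.symm
      · exact hadj'.ne rfl
  constructor
  constructor
  · -- IsTrail
    constructor
    rw [SimpleGraph.Walk.edges_append]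
    refine List.Nodup.append hQ.isTrail.edges_nodup ?_ ?_
    · rw [SimpleGraph.Walk.edges_reverse]
      exact List.nodup_reverse.mpr hR.isTrail.edges_nodup
    · intro e heQ heR
      rw [SimpleGraph.Walk.edges_reverse, List.mem_reverse] at heR
      exact hedisj e heQ heR
  · -- ne nil
    intro hnil
    have : (Q.append R.reverse).length = 0 := by rw [hnil]; rfl
    rw [SimpleGraph.Walk.length_append] at this
    have hQ0 : Q.length = 0 := by omega
    exact huv (SimpleGraph.Walk.eq_of_length_eq_zero hQ0)
  · -- support tail nodup
    rw [SimpleGraph.Walk.support_append, Q.support_eq_cons, List.cons_append, List.tail_cons]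
    have hQtail : Q.support.tail.Nodup := by
      have := hQ.support_nodup
      rw [Q.support_eq_cons, List.nodup_cons] at this
      exact this.2
    have hRrev : R.reverse.support.Nodup := by
      rw [SimpleGraph.Walk.support_reverse]
      exact List.nodup_reverse.mpr hR.support_nodup
    refine List.Nodup.append hQtail (hRrev.sublist (List.tail_sublist _)) ?_
    intro z hz1 hz2
    have hzQ : z ∈ Q.support := by
      rw [Q.support_eq_cons]; exact List.mem_cons_of_mem _ hz1
    have hzR : z ∈ R.support := by
      have : z ∈ R.reverse.support := List.mem_of_mem_tail hz2
      rwa [SimpleGraph.Walk.support_reverse, List.mem_reverse] at this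
    rcases hdisj z hzQ hzR with rfl | rfl
    · have := hQ.support_nodup
      rw [Q.support_eq_cons, List.nodup_cons] at this
      exact this.1 hz1
    · have := hRrev
      rw [R.reverse.support_eq_cons, List.nodup_cons] at this
      have h2 : z ∈ R.reverse.support.tail := by
        have := hz2
        rwa [R.reverse.support_eq_cons, List.tail_cons] at this
      exact this.1 h2

/-- The main induction: given a "high" path and a "low" path between `u` and `v`,
chordality forces the chord `uv`. -/
lemma main_induction (hG : G.Connected) (hch : IsChordal G) (r : V) (i : ℕ) :
    ∀ n : ℕ, ∀ (u v : V) (Q R : G.Walk u v), Q.IsPath → R.IsPath →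
      (∀ z ∈ Q.support, z ≠ u → z ≠ v → i < G.dist r z) →
      (∀ z ∈ R.support, z ≠ u → z ≠ v → G.dist r z < i) →
      u ≠ v → Q.length + R.length ≤ n → G.Adj u v := by
  intro n
  induction n with
  | zero =>
    intro u v Q R _ _ _ _ huv hlen
    have : Q.length = 0 := by omega
    exact absurd (SimpleGraph.Walk.eq_of_length_eq_zero this) huv
  | succ n ih =>
    intro u v Q R hQ hR hQd hRd huv hlen
    by_cases hnadj : G.Adj u v
    · exact hnadj
    exfalso
    -- both paths have length at least two
    have hQ1 : Q.length ≠ 0 := fun h =>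
      huv (SimpleGraph.Walk.eq_of_length_eq_zero h)
    have hQne : Q.length ≠ 1 := fun h =>
      hnadj (Q.adj_of_mem_edges (edge_mem_of_length_one Q h))
    have hR1 : R.length ≠ 0 := fun h =>
      huv (SimpleGraph.Walk.eq_of_length_eq_zero h)
    have hRne : R.length ≠ 1 := fun h =>
      hnadj (R.adj_of_mem_edges (edge_mem_of_length_one R h))
    -- the cycle
    have hdisj : ∀ z, z ∈ Q.support → z ∈ R.support → z = u ∨ z = v := by
      intro z hz1 hz2
      by_contra hcon
      push_neg at hcon
      exact absurd (hRd z hz2 hcon.1 hcon.2) (not_lt.mpr (le_of_lt (hQd z hz1 hcon.1 hcon.2)))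
    have hcyc := cycle_of_paths Q R hQ hR huv hnadj hdisj
    have hlen4 : 4 ≤ (Q.append R.reverse).length := by
      rw [SimpleGraph.Walk.length_append, SimpleGraph.Walk.length_reverse]
      omega
    obtain ⟨x, y, hxW, hyW, hxy, hne⟩ := hch _ hcyc hlen4
    -- locate the chord endpoints
    have hmem : ∀ z, z ∈ (Q.append R.reverse).support → z ∈ Q.support ∨ z ∈ R.support := by
      intro z hz
      rw [SimpleGraph.Walk.mem_support_append_iff] at hz
      rcases hz with hz | hz
      · exact Or.inl hz
      · right
        rwa [SimpleGraph.Walk.support_reverse, List.mem_reverse] at hz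
    have hQe : s(x, y) ∉ Q.edges := fun h => hne (by
      rw [SimpleGraph.Walk.edges_append]
      exact List.mem_append_left _ h)
    have hRe : s(x, y) ∉ R.edges := fun h => hne (by
      rw [SimpleGraph.Walk.edges_append]
      refine List.mem_append_right _ ?_
      rw [SimpleGraph.Walk.edges_reverse, List.mem_reverse]
      exact h)
    have shortenQ : x ∈ Q.support → y ∈ Q.support → False := by
      intro hx hy
      obtain ⟨Q', hQ'p, hsub, hlt⟩ := shorten Q hx hy hxy hQe
      exact hnadj (ih u v Q' R hQ'p hR
        (fun z hz h1 h2 => hQd z (hsub z hz) h1 h2) hRd huv (by omega))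
    have shortenR : x ∈ R.support → y ∈ R.support → False := by
      intro hx hy
      obtain ⟨R', hR'p, hsub, hlt⟩ := shorten R hx hy hxy hRe
      exact hnadj (ih u v Q R' hQ hR'p hQd
        (fun z hz h1 h2 => hRd z (hsub z hz) h1 h2) huv (by omega))
    -- case analysis
    by_cases hxQ : x ∈ Q.support <;> by_cases hyQ : y ∈ Q.support
    · exact shortenQ hxQ hyQ
    · -- x ∈ Q, y ∉ Q, so y ∈ R strictly
      have hyR : y ∈ R.support := (hmem y hyW).resolve_left hyQ
      by_cases hxR : x ∈ R.support
      · exact shortenR hxR hyR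
      · have hxu : x ≠ u := fun h => hxR (h ▸ R.start_mem_support)
        have hxv : x ≠ v := fun h => hxR (h ▸ R.end_mem_support)
        have hyu : y ≠ u := fun h => hyQ (h ▸ Q.start_mem_support)
        have hyv : y ≠ v := fun h => hyQ (h ▸ Q.end_mem_support)
        have h1 := hQd x hxQ hxu hxv
        have h2 := hRd y hyR hyu hyv
        have h3 := dist_le_of_adj hG r hxy.symm
        omega
    · have hxR : x ∈ R.support := (hmem x hxW).resolve_left hxQ
      by_cases hyR : y ∈ R.support
      · exact shortenR hxR hyR
      · have hyu : y ≠ u := fun h => hyR (h ▸ R.start_mem_support)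
        have hyv : y ≠ v := fun h => hyR (h ▸ R.end_mem_support)
        have hxu : x ≠ u := fun h => hxQ (h ▸ Q.start_mem_support)
        have hxv : x ≠ v := fun h => hxQ (h ▸ Q.end_mem_support)
        have h1 := hQd y hyQ hyu hyv
        have h2 := hRd x hxR hxu hxv
        have h3 := dist_le_of_adj hG r hxy
        omega
    · have hxR : x ∈ R.support := (hmem x hxW).resolve_left hxQ
      have hyR : y ∈ R.support := (hmem y hyW).resolve_left hyQ
      exact shortenR hxR hyR

end ShadowAux

open ShadowAux SimpleGraph in
/-- In a connected chordal graph with BFS-layering `(V_0, V_1, …)` rooted at `r`, for `i > 0`,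
the shadow in layer `i` of a connected subgraph `C` living in layers `> i` is a clique. -/
theorem shadow_isClique {V : Type*} [Fintype V] (G : SimpleGraph V)
    (hG : G.Connected) (hch : IsChordal G) (r : V) (i : ℕ) (hi : 0 < i)
    (C : G.Subgraph) (hC : C.Connected) (hCv : ∀ v ∈ C.verts, i < G.dist r v) :
    ∀ u ∈ shadow G r i C, ∀ v ∈ shadow G r i C, u ≠ v → G.Adj u v := by
  classical
  intro u hu v hv huv
  obtain ⟨hud, cu, hcu, Pu, hPu, hPui⟩ := hu
  obtain ⟨hvd, cv, hcv, Pv, hPv, hPvi⟩ := hv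
  -- every non-initial vertex of a shadow path is strictly above layer `i`
  have key : ∀ (w : V) (hwd : G.dist r w = i) (c : V) (hc : c ∈ C.verts)
      (P : G.Walk w c) (hP : P.IsPath)
      (hPi : ∀ x ∈ P.support, G.dist r x = i → x = w),
      ∀ z ∈ P.support, z ≠ w → i < G.dist r z := by
    intro w hwd c hc P hP hPi z hz hzw
    by_contra hcon
    push_neg at hcon
    have hzi : G.dist r z ≠ i := fun h => hzw (hPi z hz h)
    have hzlt : G.dist r z ≤ i := hcon
    obtain ⟨y, hy, hyd⟩ := exists_layer_vertex hG r i (P.dropUntil z hz)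
      hzlt (le_of_lt (hCv c hc))
    have hyP : y ∈ P.support := P.support_dropUntil_subset hz hy
    have hyw : y = w := hPi y hyP hyd
    subst hyw
    -- `w` appears both at the start and inside the tail of the drop
    have hw_tail : y ∈ (P.dropUntil z hz).support.tail := by
      have := hy
      rw [(P.dropUntil z hz).support_eq_cons] at this
      rcases List.mem_cons.mp this with h | h
      · exact absurd h.symm hzw
      · exact h
    have hnodup := hP.support_nodup
    rw [← P.take_spec hz, SimpleGraph.Walk.support_append, List.nodup_append] at hnodup
    exact hnodup.2.2 _ ((P.takeUntil z hz).start_mem_support) _ hw_tail rfl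
  -- build the high path Q
  obtain ⟨hCne, hCwalk⟩ := (SimpleGraph.Subgraph.connected_iff_forall_exists_walk_subgraph C).mp hC
  obtain ⟨Wc, hWc⟩ := hCwalk hcu hcv
  have hWcsupp : ∀ z ∈ Wc.support, z ∈ C.verts := by
    intro z hz
    exact (SimpleGraph.Subgraph.verts_mono hWc) (Wc.mem_verts_toSubgraph.mpr hz)
  set B : G.Walk u v := Pu.append (Wc.append Pv.reverse) with hB
  have hQd : ∀ z ∈ B.bypass.support, z ≠ u → z ≠ v → i < G.dist r z := by
    intro z hz hzu hzv
    have hz' := SimpleGraph.Walk.support_bypass_subset _ hz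
    rw [hB, SimpleGraph.Walk.mem_support_append_iff,
      SimpleGraph.Walk.mem_support_append_iff] at hz'
    rcases hz' with hz' | hz' | hz'
    · exact key u hud cu hcu Pu hPu hPui z hz' hzu
    · exact hCv z (hWcsupp z hz')
    · rw [SimpleGraph.Walk.support_reverse, List.mem_reverse] at hz'
      exact key v hvd cv hcv Pv hPv hPvi z hz' hzv
  -- build the low path R
  have hlow : ∀ (w : V) (hwd : G.dist r w = i), ∃ P : G.Walk r w,
      ∀ z ∈ P.support, z ≠ w → G.dist r z < i := by
    intro w hwd
    obtain ⟨P, hP⟩ := hG.exists_walk_length_eq_dist r w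
    refine ⟨P, ?_⟩
    intro z hz hzw
    have h1 : G.dist r z ≤ (P.takeUntil z hz).length := SimpleGraph.dist_le _
    have h2 : G.dist z w ≤ (P.dropUntil z hz).length := SimpleGraph.dist_le _
    have h3 : (P.takeUntil z hz).length + (P.dropUntil z hz).length = P.length := by
      rw [← SimpleGraph.Walk.length_append, P.take_spec hz]
    have h4 : 0 < G.dist z w := hG.pos_dist_of_ne hzw
    rw [hP, hwd] at h3
    omega
  obtain ⟨Ru, hRu⟩ := hlow u hud
  obtain ⟨Rv, hRv⟩ := hlow v hvd
  set Rw : G.Walk u v := Ru.reverse.append Rv with hRw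
  have hRd : ∀ z ∈ Rw.bypass.support, z ≠ u → z ≠ v → G.dist r z < i := by
    intro z hz hzu hzv
    have hz' := SimpleGraph.Walk.support_bypass_subset _ hz
    rw [hRw, SimpleGraph.Walk.mem_support_append_iff] at hz'
    rcases hz' with hz' | hz'
    · rw [SimpleGraph.Walk.support_reverse, List.mem_reverse] at hz'
      exact hRu z hz' hzu
    · exact hRv z hz' hzv
  exact main_induction hG hch r i (B.bypass.length + Rw.bypass.length) u v
    B.bypass Rw.bypass (SimpleGraph.Walk.bypass_isPath _) (SimpleGraph.Walk.bypass_isPath _)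
    hQd hRd huv le_rfl
end

section
/- Let G be a chordal graph with a BFS-layering (V_0, V_1, …), let i ≥ 0, and let H be a connected subgraph of the graph induced on the union of layers V_j with j ≥ i. Then the induced subgraph on V(H) ∩ V_i is connected. -/
namespace LayerAux

open SimpleGraph Walk

variable {V : Type*} {G : SimpleGraph V}

private lemma my_adj_dist_le (hG : G.Connected) (r : V) {a b : V} (h : G.Adj a b) :
    G.dist r b ≤ G.dist r a + 1 := by
  have h1 := hG.dist_triangle (u := r) (v := a) (w := b)
  have h2 : G.dist a b ≤ 1 := by
    simpa using SimpleGraph.dist_le (Walk.cons h Walk.nil)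
  omega

private lemma exists_parent (hG : G.Connected) {r x : V} {m : ℕ}
    (hx : G.dist r x = m + 1) : ∃ x', G.Adj x' x ∧ G.dist r x' = m := by
  obtain ⟨p, hp⟩ := (hG x r).exists_walk_length_eq_dist
  cases p with
  | nil =>
    rw [SimpleGraph.dist_self] at hx
    omega
  | @cons _ w _ h q =>
    refine ⟨w, h.symm, ?_⟩
    have h1 : G.dist r w ≤ q.reverse.length := SimpleGraph.dist_le _
    rw [Walk.length_reverse] at h1
    have h2 : G.dist r x ≤ G.dist r w + 1 := my_adj_dist_le hG r h.symm
    have h3 : G.dist x r = G.dist r x := SimpleGraph.dist_comm ..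
    rw [Walk.length_cons] at hp
    omega

private lemma isPath_concat {u v w : V} {p : G.Walk u v} (hp : p.IsPath) (h : G.Adj v w)
    (hw : w ∉ p.support) : (p.concat h).IsPath := by
  rw [Walk.isPath_def, Walk.support_concat]
  rw [List.nodup_append']
  refine ⟨hp.support_nodup, List.nodup_singleton _, ?_⟩
  intro a ha hb
  rw [List.mem_singleton] at hb
  subst hb
  exact hw ha

private lemma shortcut' {x a b y : V} (Q : G.Walk x a) (R1 : G.Walk a b) (R2 : G.Walk b y)
    (hab : G.Adj a b) (hnot : s(a, b) ∉ R1.edges) :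
    ∃ W : G.Walk x y, W.length < (Q.append (R1.append R2)).length ∧
      W.support ⊆ (Q.append (R1.append R2)).support := by
  refine ⟨Q.append (Walk.cons hab R2), ?_, ?_⟩
  · have h2 : 2 ≤ R1.length := by
      cases R1 with
      | nil => exact absurd hab G.irrefl
      | @cons _ w _ h' R1' =>
        cases R1' with
        | nil => exact absurd (by simp) hnot
        | cons h'' R1'' => simp [Walk.length_cons]
    simp only [Walk.length_append, Walk.length_cons]
    omega
  · intro z hz
    rw [Walk.mem_support_append_iff] at hz ⊢
    rcases hz with hz | hz
    · exact Or.inl hz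
    · rw [Walk.support_cons, List.mem_cons] at hz
      rcases hz with rfl | hz
      · exact Or.inl (Walk.end_mem_support Q)
      · exact Or.inr (Walk.subset_support_append_right _ _ hz)

private lemma shortcut {x y a b : V} (P : G.Walk x y) (hab : G.Adj a b)
    (ha : a ∈ P.support) (hb : b ∈ P.support) (hnot : s(a, b) ∉ P.edges) :
    ∃ W : G.Walk x y, W.length < P.length ∧ W.support ⊆ P.support := by
  obtain ⟨Q, R, rfl⟩ := Walk.mem_support_iff_exists_append.mp ha
  rw [Walk.mem_support_append_iff] at hb
  rcases hb with hb | hb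
  · obtain ⟨Q1, Q2, rfl⟩ := Walk.mem_support_iff_exists_append.mp hb
    rw [← Walk.append_assoc] at hnot ⊢
    have hnot2 : s(b, a) ∉ Q2.edges := by
      intro hm
      apply hnot
      rw [Sym2.eq_swap] at hm
      rw [Walk.edges_append]
      exact List.mem_append_right _ (by rw [Walk.edges_append]; exact List.mem_append_left _ hm)
    exact shortcut' Q1 Q2 R hab.symm hnot2
  · obtain ⟨R1, R2, rfl⟩ := Walk.mem_support_iff_exists_append.mp hb
    have hnot2 : s(a, b) ∉ R1.edges := by
      intro hm
      apply hnot
      rw [Walk.edges_append]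
      exact List.mem_append_right _ (by rw [Walk.edges_append]; exact List.mem_append_left _ hm)
    exact shortcut' Q R1 R2 hab hnot2

/-- If `c` is adjacent to both `x` and `y`, which are one BFS-level above `c`, and `x, y`
are joined by a path whose interior lies at least two levels above `c`, then `x = y` or
`x ~ y`. -/
private lemma lemG (hG : G.Connected) (hch : IsChordal G) (r : V) :
    ∀ N : ℕ, ∀ (c x y : V) (P : G.Walk x y),
      P.length ≤ N → P.IsPath →
      G.Adj c x → G.Adj c y →
      G.dist r x = G.dist r c + 1 → G.dist r y = G.dist r c + 1 →
      (∀ z ∈ P.support, z ≠ x → z ≠ y → G.dist r c + 2 ≤ G.dist r z) →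
      x = y ∨ G.Adj x y := by
  classical
  intro N
  induction N using Nat.strong_induction_on with
  | _ N ih =>
  intro c x y P hlen hP hcx hcy hdx hdy hint
  by_cases hxy : x = y
  · exact Or.inl hxy
  right
  by_cases hl1 : P.length ≤ 1
  · rcases Nat.le_one_iff_eq_zero_or_eq_one.mp hl1 with h0 | h1
    · exact absurd (Walk.eq_of_length_eq_zero h0) hxy
    · exact Walk.adj_of_length_eq_one h1
  push_neg at hl1
  have hcP : c ∉ P.support := by
    intro hc
    by_cases h1 : c = x
    · subst h1; omega
    by_cases h2 : c = y
    · subst h2; omega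
    · have := hint c hc h1 h2; omega
  have hQ : (P.concat hcy.symm).IsPath := isPath_concat hP hcy.symm hcP
  have hce : s(c, x) ∉ (P.concat hcy.symm).edges := by
    rw [Walk.edges_concat, List.concat_eq_append]
    intro hm
    rcases List.mem_append.mp hm with hm | hm
    · exact hcP (Walk.fst_mem_support_of_mem_edges P hm)
    · rw [List.mem_singleton, Sym2.eq_iff] at hm
      rcases hm with ⟨rfl, rfl⟩ | ⟨-, rfl⟩
      · omega
      · exact hxy rfl
  have hWcyc : (Walk.cons hcx (P.concat hcy.symm)).IsCycle :=
    (Walk.cons_isCycle_iff _ _).mpr ⟨hQ, hce⟩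
  have hWlen : 4 ≤ (Walk.cons hcx (P.concat hcy.symm)).length := by
    rw [Walk.length_cons, Walk.length_concat]
    omega
  obtain ⟨z1, z2, hz1, hz2, hzadj, hznot⟩ := hch _ hWcyc hWlen
  have hmem : ∀ z, z ∈ (Walk.cons hcx (P.concat hcy.symm)).support →
      z = c ∨ z ∈ P.support := by
    intro z hz
    simp only [Walk.support_cons, Walk.support_concat, List.concat_eq_append,
      List.mem_cons, List.mem_append, List.mem_singleton, List.not_mem_nil, or_false] at hz
    tauto
  have hPedges : ∀ e ∈ P.edges, e ∈ (Walk.cons hcx (P.concat hcy.symm)).edges := by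
    intro e he
    simp only [Walk.edges_cons, Walk.edges_concat, List.concat_eq_append,
      List.mem_cons, List.mem_append, List.mem_singleton]
    tauto
  have hc_case : ∀ z, z ∈ P.support → G.Adj c z →
      s(c, z) ∉ (Walk.cons hcx (P.concat hcy.symm)).edges → False := by
    intro z hzP hadj hnot
    by_cases hzx : z = x
    · subst hzx
      exact hnot (by simp [Walk.edges_cons])
    by_cases hzy : z = y
    · subst hzy
      apply hnot
      rw [Walk.edges_cons, Walk.edges_concat, List.concat_eq_append]
      refine List.mem_cons_of_mem _ (List.mem_append_right _ ?_)
      rw [List.mem_singleton]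
      exact Sym2.eq_swap
    · have h1 := hint z hzP hzx hzy
      have h2 := my_adj_dist_le hG r hadj
      omega
  rcases hmem z1 hz1 with rfl | hz1P
  · rcases hmem z2 hz2 with rfl | hz2P
    · exact absurd hzadj G.irrefl
    · exact absurd (hc_case z2 hz2P hzadj hznot) id
  · rcases hmem z2 hz2 with rfl | hz2P
    · exact (hc_case z1 hz1P hzadj.symm (by rwa [Sym2.eq_swap])).elim
    · have hno : s(z1, z2) ∉ P.edges := fun hm => hznot (hPedges _ hm)
      obtain ⟨W', hWl, hWs⟩ := shortcut P hzadj hz1P hz2P hno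
      have hbl : W'.bypass.length < P.length := lt_of_le_of_lt W'.length_bypass_le hWl
      have hbs : W'.bypass.support ⊆ P.support := fun z hz => hWs (W'.support_bypass_subset hz)
      have hrec := ih W'.bypass.length (by omega) c x y W'.bypass le_rfl W'.bypass_isPath
        hcx hcy hdx hdy (fun z hz hzx hzy => hint z (hbs hz) hzx hzy)
      exact hrec.resolve_left hxy

/-- If `x` and `y` are at BFS-level `m` and joined by a path whose interior lies strictly
above level `m`, then `x = y` or `x ~ y`. -/
private lemma lemF (hG : G.Connected) (hch : IsChordal G) (r : V) :
    ∀ m : ℕ, ∀ N : ℕ, ∀ (x y : V) (P : G.Walk x y),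
      P.length ≤ N → P.IsPath →
      G.dist r x = m → G.dist r y = m →
      (∀ z ∈ P.support, z ≠ x → z ≠ y → m + 1 ≤ G.dist r z) →
      x = y ∨ G.Adj x y := by
  classical
  intro m
  induction m using Nat.strong_induction_on with
  | _ m ihm =>
  intro N
  induction N using Nat.strong_induction_on with
  | _ N ihN =>
  intro x y P hlen hP hdx hdy hint
  by_cases hxy : x = y
  · exact Or.inl hxy
  right
  by_cases hl1 : P.length ≤ 1
  · rcases Nat.le_one_iff_eq_zero_or_eq_one.mp hl1 with h0 | h1
    · exact absurd (Walk.eq_of_length_eq_zero h0) hxy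
    · exact Walk.adj_of_length_eq_one h1
  push_neg at hl1
  cases m with
  | zero =>
    have hx0 : r = x := (hG.dist_eq_zero_iff).mp hdx
    have hy0 : r = y := (hG.dist_eq_zero_iff).mp hdy
    exact absurd (hx0 ▸ hy0) hxy
  | succ m =>
  obtain ⟨x', hx'adj, hx'd⟩ := exists_parent hG hdx
  obtain ⟨y', hy'adj, hy'd⟩ := exists_parent hG hdy
  have hnotinP : ∀ w, G.dist r w = m → w ∉ P.support := by
    intro w hw hwP
    by_cases h1 : w = x
    · subst h1; omega
    by_cases h2 : w = y
    · subst h2; omega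
    · have := hint w hwP h1 h2; omega
  by_cases hx'y' : x' = y'
  · subst hx'y'
    have hrec := lemG hG hch r P.length x' x y P le_rfl hP hx'adj hy'adj (by omega) (by omega)
      (by intro z hz h1 h2; have := hint z hz h1 h2; omega)
    exact hrec.resolve_left hxy
  · -- extended path x' - x - P - y - y'
    have hPy' : (P.concat hy'adj.symm).IsPath :=
      isPath_concat hP hy'adj.symm (hnotinP y' hy'd)
    have hPext : (Walk.cons hx'adj (P.concat hy'adj.symm)).IsPath := by
      refine (Walk.cons_isPath_iff _ _).mpr ⟨hPy', ?_⟩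
      rw [Walk.support_concat]
      intro h
      rcases List.mem_append.mp h with h | h
      · exact hnotinP x' hx'd h
      · rw [List.mem_singleton] at h
        exact hx'y' h
    have hext := ihm m (Nat.lt_succ_self m)
      (Walk.cons hx'adj (P.concat hy'adj.symm)).length x' y' _ le_rfl hPext hx'd hy'd
      (by
        intro z hz hzx' hzy'
        simp only [Walk.support_cons, Walk.support_concat, List.concat_eq_append,
          List.mem_cons, List.mem_append, List.mem_singleton, List.not_mem_nil, or_false] at hz
        rcases hz with rfl | hz | rfl
        · exact absurd rfl hzx'
        · by_cases h1 : z = x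
          · subst h1; omega
          by_cases h2 : z = y
          · subst h2; omega
          · have := hint z hz h1 h2; omega
        · exact absurd rfl hzy')
    have hadj' : G.Adj x' y' := hext.resolve_left hx'y'
    -- the big cycle x' - x - P - y - y' - x'
    have hQpath : ((P.concat hy'adj.symm).concat hadj'.symm).IsPath := by
      refine isPath_concat hPy' hadj'.symm ?_
      rw [Walk.support_concat]
      intro h
      rcases List.mem_append.mp h with h | h
      · exact hnotinP x' hx'd h
      · rw [List.mem_singleton] at h
        exact hx'y' h
    have hce2 : s(x', x) ∉ ((P.concat hy'adj.symm).concat hadj'.symm).edges := by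
      simp only [Walk.edges_concat, List.concat_eq_append, List.mem_append,
        List.mem_singleton]
      rintro ((h | h) | h)
      · exact hnotinP x' hx'd (Walk.fst_mem_support_of_mem_edges P h)
      · rw [Sym2.eq_iff] at h
        rcases h with ⟨rfl, rfl⟩ | ⟨rfl, rfl⟩
        · omega
        · exact hx'y' rfl
      · rw [Sym2.eq_iff] at h
        rcases h with ⟨rfl, rfl⟩ | ⟨-, rfl⟩
        · exact hx'y' rfl
        · omega
    have hWcyc : (Walk.cons hx'adj ((P.concat hy'adj.symm).concat hadj'.symm)).IsCycle :=
      (Walk.cons_isCycle_iff _ _).mpr ⟨hQpath, hce2⟩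
    have hWlen : 4 ≤ (Walk.cons hx'adj ((P.concat hy'adj.symm).concat hadj'.symm)).length := by
      rw [Walk.length_cons, Walk.length_concat, Walk.length_concat]
      omega
    obtain ⟨z1, z2, hz1, hz2, hzadj, hznot⟩ := hch _ hWcyc hWlen
    have hmem : ∀ z, z ∈ (Walk.cons hx'adj ((P.concat hy'adj.symm).concat hadj'.symm)).support →
        z ∈ P.support ∨ z = y' ∨ z = x' := by
      intro z hz
      simp only [Walk.support_cons, Walk.support_concat, List.concat_eq_append,
        List.mem_cons, List.mem_append, List.mem_singleton, List.not_mem_nil, or_false] at hz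
      tauto
    have hPedges2 : ∀ e ∈ P.edges,
        e ∈ (Walk.cons hx'adj ((P.concat hy'adj.symm).concat hadj'.symm)).edges := by
      intro e he
      simp only [Walk.edges_cons, Walk.edges_concat, List.concat_eq_append,
        List.mem_cons, List.mem_append, List.mem_singleton]
      tauto
    have hx'chord : ∀ z, z ∈ P.support → G.Adj x' z →
        s(x', z) ∉ (Walk.cons hx'adj ((P.concat hy'adj.symm).concat hadj'.symm)).edges →
        G.Adj x y := by
      intro z hzP hadjz hnot
      by_cases h1 : z = x
      · refine absurd ?_ hnot
        rw [h1, Walk.edges_cons]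
        exact List.mem_cons_self
      by_cases h2 : z = y
      · have hadjy : G.Adj x' y := h2 ▸ hadjz
        have hrec := lemG hG hch r P.length x' x y P le_rfl hP hx'adj hadjy
          (by omega) (by omega)
          (by intro w hw hwx hwy; have := hint w hw hwx hwy; omega)
        exact hrec.resolve_left hxy
      · have ha := hint z hzP h1 h2
        have hb := my_adj_dist_le hG r hadjz
        omega
    have hy'chord : ∀ z, z ∈ P.support → G.Adj y' z →
        s(y', z) ∉ (Walk.cons hx'adj ((P.concat hy'adj.symm).concat hadj'.symm)).edges →
        G.Adj x y := by
      intro z hzP hadjz hnot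
      by_cases h2 : z = y
      · refine absurd ?_ hnot
        rw [h2, Walk.edges_cons, Walk.edges_concat, Walk.edges_concat, List.concat_eq_append,
          List.concat_eq_append]
        refine List.mem_cons_of_mem _ (List.mem_append_left _ (List.mem_append_right _ ?_))
        rw [List.mem_singleton]
        exact Sym2.eq_swap
      by_cases h1 : z = x
      · have hadjx : G.Adj y' x := h1 ▸ hadjz
        have hrec := lemG hG hch r P.length y' x y P le_rfl hP hadjx hy'adj
          (by omega) (by omega)
          (by intro w hw hwx hwy; have := hint w hw hwx hwy; omega)
        exact hrec.resolve_left hxy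
      · have ha := hint z hzP h1 h2
        have hb := my_adj_dist_le hG r hadjz
        omega
    rcases hmem z1 hz1 with h1 | h1 | h1
    · rcases hmem z2 hz2 with h2 | h2 | h2
      · have hno : s(z1, z2) ∉ P.edges := fun hm => hznot (hPedges2 _ hm)
        obtain ⟨W', hWl, hWs⟩ := shortcut P hzadj h1 h2 hno
        have hbl : W'.bypass.length < P.length := lt_of_le_of_lt W'.length_bypass_le hWl
        have hbs : W'.bypass.support ⊆ P.support := fun z hz => hWs (W'.support_bypass_subset hz)
        have hrec := ihN W'.bypass.length (by omega) x y W'.bypass le_rfl W'.bypass_isPath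
          hdx hdy (fun z hz hzx hzy => hint z (hbs hz) hzx hzy)
        exact hrec.resolve_left hxy
      · subst h2
        exact hy'chord z1 h1 hzadj.symm (by rwa [Sym2.eq_swap])
      · subst h2
        exact hx'chord z1 h1 hzadj.symm (by rwa [Sym2.eq_swap])
    · subst h1
      rcases hmem z2 hz2 with h2 | h2 | h2
      · exact hy'chord z2 h2 hzadj hznot
      · subst h2
        exact absurd hzadj G.irrefl
      · subst h2
        apply absurd _ hznot
        rw [Walk.edges_cons, Walk.edges_concat, Walk.edges_concat, List.concat_eq_append,
          List.concat_eq_append]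
        refine List.mem_cons_of_mem _ (List.mem_append_right _ ?_)
        rw [List.mem_singleton]
    · subst h1
      rcases hmem z2 hz2 with h2 | h2 | h2
      · exact hx'chord z2 h2 hzadj hznot
      · subst h2
        apply absurd _ hznot
        rw [Walk.edges_cons, Walk.edges_concat, Walk.edges_concat, List.concat_eq_append,
          List.concat_eq_append]
        refine List.mem_cons_of_mem _ (List.mem_append_right _ ?_)
        rw [List.mem_singleton]
        exact Sym2.eq_swap
      · subst h2
        exact absurd hzadj G.irrefl

/-- Split a walk ending at level `i` (with all vertices at level `≥ i` and starting
above level `i`) at its first vertex of level `i`. -/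
private lemma split_at_level (r : V) (i : ℕ) :
    ∀ {w v : V} (Q : G.Walk w v),
      (∀ z ∈ Q.support, i ≤ G.dist r z) → G.dist r v = i → i + 1 ≤ G.dist r w →
      ∃ (s : V) (Q1 : G.Walk w s) (Q2 : G.Walk s v),
        Q = Q1.append Q2 ∧ G.dist r s = i ∧ 1 ≤ Q1.length ∧
        ∀ z ∈ Q1.support, z ≠ s → i + 1 ≤ G.dist r z := by
  intro w v Q
  induction Q with
  | nil =>
    intro _ h1 h2
    omega
  | @cons a b c h q ih =>
    intro hall h1 h2
    by_cases hb : G.dist r b = i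
    · refine ⟨b, Walk.cons h Walk.nil, q, rfl, hb, by simp, ?_⟩
      intro z hz hzs
      simp only [Walk.support_cons, Walk.support_nil, List.mem_cons,
        List.mem_singleton, List.not_mem_nil, or_false] at hz
      rcases hz with rfl | rfl
      · exact h2
      · exact absurd rfl hzs
    · have hball : i + 1 ≤ G.dist r b := by
        have := hall b (by simp)
        omega
      obtain ⟨s, Q1, Q2, hsplit, hds, hlen1, hint1⟩ :=
        ih (fun z hz => hall z (by rw [Walk.support_cons]; exact List.mem_cons_of_mem _ hz))
          h1 hball
      refine ⟨s, Walk.cons h Q1, Q2, ?_, hds, by simp, ?_⟩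
      · rw [Walk.cons_append, ← hsplit]
      · intro z hz hzs
        rw [Walk.support_cons, List.mem_cons] at hz
        rcases hz with rfl | hz
        · exact h2
        · exact hint1 z hz hzs

private lemma main_reach (hG : G.Connected) (hch : IsChordal G)
    (r : V) (i : ℕ) (S : Set V) (hSlev : ∀ v ∈ S, i ≤ G.dist r v) :
    ∀ N : ℕ, ∀ (u v : V) (hu : u ∈ S ∩ {x | G.dist r x = i}) (hv : v ∈ S ∩ {x | G.dist r x = i})
      (P : G.Walk u v), P.length ≤ N → P.IsPath → (∀ z ∈ P.support, z ∈ S) →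
      (G.induce (S ∩ {x | G.dist r x = i})).Reachable ⟨u, hu⟩ ⟨v, hv⟩ := by
  intro N
  induction N using Nat.strong_induction_on with
  | _ N ih =>
  intro u v hu hv P hlen hP hsup
  cases P with
  | nil =>
    have : (⟨u, hu⟩ : ↥(S ∩ {x | G.dist r x = i})) = ⟨u, hv⟩ := Subtype.ext rfl
    rw [this]
  | @cons _ w _ h Q =>
    have hQsup : ∀ z ∈ Q.support, z ∈ S := by
      intro z hz
      exact hsup z (by rw [Walk.support_cons]; exact List.mem_cons_of_mem _ hz)
    have hwS : w ∈ S := hQsup w Q.start_mem_support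
    have hwlev : i ≤ G.dist r w := hSlev w hwS
    rw [Walk.length_cons] at hlen
    by_cases hwi : G.dist r w = i
    · have hstep : (G.induce (S ∩ {x | G.dist r x = i})).Adj ⟨u, hu⟩ ⟨w, ⟨hwS, hwi⟩⟩ := by
        simpa using h
      refine hstep.reachable.trans ?_
      exact ih Q.length (by omega) w v ⟨hwS, hwi⟩ hv Q le_rfl hP.of_cons hQsup
    · have hwlev' : i + 1 ≤ G.dist r w := by omega
      obtain ⟨s, Q1, Q2, hsplit, hds, hlen1, hint1⟩ :=
        split_at_level r i Q (fun z hz => hSlev z (hQsup z hz)) hv.2 hwlev'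
      have hsS : s ∈ S := hQsup s (by
        rw [hsplit]
        exact Walk.subset_support_append_left _ _ Q1.end_mem_support)
      have hPeq : Walk.cons h Q = (Walk.cons h Q1).append Q2 := by
        rw [hsplit, Walk.cons_append]
      have hP1 : (Walk.cons h Q1).IsPath := by
        rw [hPeq] at hP
        exact hP.of_append_left
      have hus : u = s ∨ G.Adj u s := by
        refine lemF hG hch r i (Walk.cons h Q1).length u s (Walk.cons h Q1) le_rfl hP1
          hu.2 hds ?_
        intro z hz hzu hzs
        rw [Walk.support_cons, List.mem_cons] at hz
        rcases hz with rfl | hz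
        · exact absurd rfl hzu
        · exact hint1 z hz hzs
      rcases hus with rfl | hus
      · -- u = s would mean u appears inside Q, contradicting that cons h Q is a path
        exfalso
        have husup : u ∈ Q.support := by
          rw [hsplit]
          exact Walk.subset_support_append_left _ _ Q1.end_mem_support
        exact ((Walk.cons_isPath_iff h Q).mp hP).2 husup
      · have hstep : (G.induce (S ∩ {x | G.dist r x = i})).Adj ⟨u, hu⟩ ⟨s, ⟨hsS, hds⟩⟩ := by
          simpa using hus
        refine hstep.reachable.trans ?_
        have hQ2path : Q2.IsPath := by
          rw [hPeq] at hP
          exact hP.of_append_right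
        have hQ2sup : ∀ z ∈ Q2.support, z ∈ S := by
          intro z hz
          refine hQsup z ?_
          rw [hsplit]
          exact Walk.subset_support_append_right _ _ hz
        have hQlen : Q.length = Q1.length + Q2.length := by
          rw [hsplit, Walk.length_append]
        exact ih Q2.length (by omega) s v ⟨hsS, hds⟩ hv Q2 le_rfl hQ2path hQ2sup

end LayerAux

/-- In a connected chordal graph with BFS-layering `(V_0, V_1, …)` rooted at `r`
(layer `V_i` is the set of vertices at distance exactly `i` from `r`), if `H` is a
connected subgraph contained in the union of the layers `V_j` with `j ≥ i`, then the
subgraph induced on `V(H) ∩ V_i` is connected. -/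
theorem layer_intersection_connected {V : Type*} [Fintype V] (G : SimpleGraph V)
    (hG : G.Connected) (hch : IsChordal G) (r : V) (i : ℕ)
    (H : G.Subgraph) (hH : H.Connected) (hHv : ∀ v ∈ H.verts, i ≤ G.dist r v) :
    (G.induce (H.verts ∩ {v | G.dist r v = i})).Preconnected := by
  classical
  rintro ⟨u, hu⟩ ⟨v, hv⟩
  obtain ⟨w0⟩ := hH.coe ⟨u, hu.1⟩ ⟨v, hv.1⟩
  have hsup : ∀ z ∈ (w0.map H.hom).bypass.support, z ∈ H.verts := by
    intro z hz
    have hz' := (w0.map H.hom).support_bypass_subset hz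
    rw [SimpleGraph.Walk.support_map] at hz'
    obtain ⟨⟨z', hz'mem⟩, _, rfl⟩ := List.mem_map.mp hz'
    exact hz'mem
  exact LayerAux.main_reach hG hch r i H.verts hHv (w0.map H.hom).bypass.length u v hu hv
    (w0.map H.hom).bypass le_rfl (w0.map H.hom).bypass_isPath hsup
end

section
/- Let G be a maximal outerplanar graph with a BFS-layering (V_0, V_1, …). Then for every i ≥ 0 the induced subgraph G[V_i] is a linear forest, i.e., every connected component of G[V_i] is a path (equivalently, G[V_i] is a forest with maximum degree at most 2). -/
/-- `H` is a minor of `G`: there are pairwise disjoint connected branch sets in `G`,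
one for each vertex of `H`, with edges of `H` realized by edges of `G` between the
corresponding branch sets. -/
def IsMinorOf {W V : Type*} (H : SimpleGraph W) (G : SimpleGraph V) : Prop :=
  ∃ f : W → Set V,
    (∀ w : W, (G.induce (f w)).Connected) ∧
    (∀ w w' : W, w ≠ w' → Disjoint (f w) (f w')) ∧
    (∀ ⦃w w' : W⦄, H.Adj w w' → ∃ u ∈ f w, ∃ v ∈ f w', G.Adj u v)

/-- A graph is outerplanar iff it has no `K₄`-minor and no `K_{2,3}`-minor. -/
def Outerplanar {V : Type*} (G : SimpleGraph V) : Prop :=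
  ¬ IsMinorOf (SimpleGraph.completeGraph (Fin 4)) G ∧
  ¬ IsMinorOf (completeBipartiteGraph (Fin 2) (Fin 3)) G

section Helpers

open SimpleGraph

variable {V : Type*} {G : SimpleGraph V}


lemma subgraph_induce_connected (H : G.Subgraph) (h : H.Connected) :
    (G.induce H.verts).Connected :=
  SimpleGraph.Connected.mono (fun _ _ hab => H.adj_sub hab)
    (SimpleGraph.Subgraph.connected_iff'.mp h)

lemma walk_support_connected {a b : V} (p : G.Walk a b) :
    (G.induce {x | x ∈ p.support}).Connected := by
  rw [← p.verts_toSubgraph]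
  exact subgraph_induce_connected _ p.toSubgraph_connected

lemma singleton_connected (G : SimpleGraph V) (x : V) : (G.induce {x}).Connected := by
  rw [connected_iff]
  refine ⟨fun u v => ?_, ⟨⟨x, rfl⟩⟩⟩
  have : u = v := Subtype.ext (u.2.trans v.2.symm)
  exact this ▸ Reachable.refl u

lemma exists_adj_dist (hG : G.Connected) (r v : V) (n : ℕ)
    (h : G.dist r v = n + 1) : ∃ u, G.Adj u v ∧ G.dist r u = n := by
  obtain ⟨p, hp⟩ := exists_walk_of_dist_ne_zero (G := G) (u := r) (v := v) (by omega)
  have hnn : ¬ p.reverse.Nil := by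
    rw [Walk.not_nil_iff_lt_length]; rw [Walk.length_reverse]; omega
  obtain ⟨u, hadj, q, hq⟩ := Walk.not_nil_iff.mp hnn
  refine ⟨u, hadj.symm, ?_⟩
  have hql : q.length = n := by
    have := congrArg Walk.length hq
    simp [Walk.length_reverse] at this ⊢
    omega
  have h1 : G.dist r u ≤ n := by
    have := dist_le q.reverse
    simpa [hql] using this
  have h2 : G.dist r v ≤ G.dist r u + 1 := by
    calc G.dist r v ≤ G.dist r u + G.dist u v := hG.dist_triangle
    _ ≤ G.dist r u + 1 := by
        have : G.dist u v ≤ 1 := by simpa using dist_le (Walk.cons hadj.symm Walk.nil)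
        omega
  omega

lemma ball_connected (hG : G.Connected) (r : V) (n : ℕ) :
    (G.induce {u | G.dist r u ≤ n}).Connected := by
  have hr : r ∈ {u | G.dist r u ≤ n} := by simp [hG.dist_eq_zero_iff.mpr rfl]
  rw [connected_iff]
  refine ⟨fun u v => ?_, ⟨⟨r, hr⟩⟩⟩
  suffices H : ∀ m (u : {u | G.dist r u ≤ n}), G.dist r u.1 = m →
      (G.induce {u | G.dist r u ≤ n}).Reachable u ⟨r, hr⟩ by
    exact ((H _ u rfl).trans (H _ v rfl).symm)
  intro m
  induction m with
  | zero => intro u hu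
            have : u.1 = r := (hG.dist_eq_zero_iff.mp (by rw [dist_comm]; exact hu))
            exact Reachable.refl _ |>.mono le_rfl |>.trans (by rw [show u = ⟨r, hr⟩ from Subtype.ext this])
  | succ k ih =>
      intro u hu
      obtain ⟨w, hadj, hw⟩ := exists_adj_dist hG r u.1 k hu
      have hwmem : w ∈ {u | G.dist r u ≤ n} := by
        have := u.2
        simp only [Set.mem_setOf_eq] at this ⊢
        omega
      have : (G.induce {u | G.dist r u ≤ n}).Adj ⟨w, hwmem⟩ u := hadj
      exact this.reachable.symm.trans (ih ⟨w, hwmem⟩ hw)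

end Helpers

open SimpleGraph

/-- For a maximal outerplanar graph `G` with BFS-layering `(V_0, V_1, …)` rooted at `r`,
each layer induces a linear forest: a forest of maximum degree at most 2. -/
theorem layers_are_linear_forests {V : Type*} [Fintype V] (G : SimpleGraph V)
    (hG : G.Connected) (hop : Outerplanar G)
    (hmax : ∀ u v : V, u ≠ v → ¬ G.Adj u v →
      ¬ Outerplanar (G ⊔ SimpleGraph.fromEdgeSet {s(u, v)}))
    (r : V) (i : ℕ) :
    (G.induce {v | G.dist r v = i}).IsAcyclic ∧
    ∀ v, ((G.induce {v | G.dist r v = i}).neighborSet v).ncard ≤ 2 := by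
  obtain _ | n := i
  · -- layer 0
    have noadj : ∀ x y : {v | G.dist r v = (0:ℕ)},
        ¬ (G.induce {v | G.dist r v = (0:ℕ)}).Adj x y := by
      rintro x y hxy
      have hx : x.1 = r := by rw [← hG.dist_eq_zero_iff, dist_comm]; exact x.2
      have hy : y.1 = r := by rw [← hG.dist_eq_zero_iff, dist_comm]; exact y.2
      have : G.Adj x.1 y.1 := hxy
      rw [hx, hy] at this
      exact G.irrefl this
    constructor
    · intro u p hp
      have hnn : ¬ p.Nil := by
        rw [Walk.not_nil_iff_lt_length]
        have := hp.three_le_length; omega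
      obtain ⟨y, hadj, _, _⟩ := Walk.not_nil_iff.mp hnn
      exact noadj _ _ hadj
    · intro v
      have : (G.induce {v | G.dist r v = (0:ℕ)}).neighborSet v = ∅ :=
        Set.eq_empty_of_forall_notMem (fun y hy => noadj _ _ hy)
      rw [this]; simp
  · -- layer n+1
    set S : Set V := {v | G.dist r v = n + 1} with hS
    set B : Set V := {u | G.dist r u ≤ n} with hB
    have hBS : ∀ x ∈ B, ∀ y ∈ S, x ≠ y := by
      rintro x hx y hy rfl
      simp only [hB, hS, Set.mem_setOf_eq] at hx hy
      omega
    have hBadj : ∀ x ∈ S, ∃ u ∈ B, G.Adj u x := by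
      intro x hx
      obtain ⟨u, hu1, hu2⟩ := exists_adj_dist hG r x n hx
      exact ⟨u, by simp [hB, hu2], hu1⟩
    constructor
    · -- acyclic
      intro u p hp
      set q := p.map (SimpleGraph.Embedding.induce S).toHom with hqdef
      have hq : q.IsCycle := hp.map Subtype.val_injective
      have hsupS : ∀ x ∈ q.support, x ∈ S := by
        intro x hx
        rw [hqdef, Walk.support_map] at hx
        obtain ⟨y, _, rfl⟩ := List.mem_map.mp hx
        exact y.2
      have hqnn : ¬ q.Nil := by
        rw [Walk.not_nil_iff_lt_length]; have := hq.three_le_length; omega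
      obtain ⟨b, h1, q1, hq_eq⟩ := Walk.not_nil_iff.mp hqnn
      have hq1len : 2 ≤ q1.length := by
        have h3 := hq.three_le_length
        have := congrArg Walk.length hq_eq
        rw [Walk.length_cons] at this; omega
      have hq1nn : ¬ q1.reverse.Nil := by
        rw [Walk.not_nil_iff_lt_length, Walk.length_reverse]; omega
      obtain ⟨d, h2, q2, hq1_eq⟩ := Walk.not_nil_iff.mp hq1nn
      have hq2nn : ¬ q2.reverse.Nil := by
        rw [Walk.not_nil_iff_lt_length, Walk.length_reverse]
        have := congrArg Walk.length hq1_eq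
        rw [Walk.length_reverse, Walk.length_cons] at this; omega
      obtain ⟨c, h3, q3, hq2_eq⟩ := Walk.not_nil_iff.mp hq2nn
      -- supports
      have e2 : q2.support = (b :: q3.support).reverse := by
        have h := congrArg Walk.support hq2_eq
        rw [Walk.support_reverse, Walk.support_cons] at h
        rw [← h, List.reverse_reverse]
      have e1 : q1.support = b :: (q3.support ++ [u.1]) := by
        have h0 := congrArg Walk.support hq1_eq
        rw [Walk.support_reverse, Walk.support_cons] at h0
        have h : q1.support.reverse = u.1 :: q2.support := h0
        have h' : q1.support = (u.1 :: q2.support).reverse := by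
          rw [← h, List.reverse_reverse]
        rw [h', e2]; simp
      have hnd : (b :: (q3.support ++ [u.1])).Nodup := by
        have hnd0 := hq.support_nodup
        rw [hq_eq, Walk.support_cons, List.tail_cons, e1] at hnd0
        exact hnd0
      rw [List.nodup_cons] at hnd
      obtain ⟨hb1, hnd2⟩ := hnd
      have hbT : b ∉ q3.support := fun h => hb1 (List.mem_append_left _ h)
      have hbu : b ≠ u.1 := fun h => hb1 (List.mem_append_right _ (by simp [h]))
      have huT : u.1 ∉ q3.support := by
        rw [List.nodup_append] at hnd2
        exact fun h => hnd2.2.2 _ h _ (by simp) rfl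
      -- memberships in S
      have hq1subq : ∀ x ∈ q1.support, x ∈ q.support := by
        intro x hx; rw [hq_eq, Walk.support_cons]; exact List.mem_cons_of_mem _ hx
      have hbS : b ∈ S := hsupS b (hq1subq b (q1.start_mem_support))
      have hTS : ∀ x ∈ q3.support, x ∈ S := by
        intro x hx
        exact hsupS x (hq1subq x (by rw [e1]; exact List.mem_cons_of_mem _ (List.mem_append_left _ hx)))
      have huS : u.1 ∈ S := u.2
      have hcT : c ∈ q3.support := q3.start_mem_support
      have hdT : d ∈ q3.support := q3.end_mem_support
      -- build K4 minor
      refine hop.1 ⟨(fun j : Fin 4 => match j with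
        | 0 => B | 1 => {u.1} | 2 => {b} | 3 => {x | x ∈ q3.support}), ?_, ?_, ?_⟩
      · intro w
        fin_cases w
        · exact ball_connected hG r n
        · exact singleton_connected G u.1
        · exact singleton_connected G b
        · exact walk_support_connected q3
      · have D01 : Disjoint B {u.1} := by
          rw [Set.disjoint_right]; rintro x rfl hx; exact hBS _ hx _ huS rfl
        have D02 : Disjoint B {b} := by
          rw [Set.disjoint_right]; rintro x rfl hx; exact hBS _ hx _ hbS rfl
        have D03 : Disjoint B {x | x ∈ q3.support} := by
          rw [Set.disjoint_right]; intro x hx hxB; exact hBS _ hxB _ (hTS x hx) rfl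
        have D12 : Disjoint ({u.1} : Set V) {b} := by
          rw [Set.disjoint_singleton]; exact fun h => hbu h.symm
        have D13 : Disjoint ({u.1} : Set V) {x | x ∈ q3.support} := by
          rw [Set.disjoint_left]; rintro x rfl hx; exact huT hx
        have D23 : Disjoint ({b} : Set V) {x | x ∈ q3.support} := by
          rw [Set.disjoint_left]; rintro x rfl hx; exact hbT hx
        intro w w' hne
        fin_cases w <;> fin_cases w' <;>
          first
            | exact absurd rfl hne
            | exact D01 | exact D02 | exact D03 | exact D12 | exact D13 | exact D23
            | exact D01.symm | exact D02.symm | exact D03.symm | exact D12.symm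
            | exact D13.symm | exact D23.symm
      · have E01 : ∃ x ∈ B, ∃ y ∈ ({u.1} : Set V), G.Adj x y := by
          obtain ⟨z, hz1, hz2⟩ := hBadj u.1 huS; exact ⟨z, hz1, u.1, rfl, hz2⟩
        have E02 : ∃ x ∈ B, ∃ y ∈ ({b} : Set V), G.Adj x y := by
          obtain ⟨z, hz1, hz2⟩ := hBadj b hbS; exact ⟨z, hz1, b, rfl, hz2⟩
        have E03 : ∃ x ∈ B, ∃ y ∈ {x | x ∈ q3.support}, G.Adj x y := by
          obtain ⟨z, hz1, hz2⟩ := hBadj c (hTS c hcT); exact ⟨z, hz1, c, hcT, hz2⟩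
        have E12 : ∃ x ∈ ({u.1} : Set V), ∃ y ∈ ({b} : Set V), G.Adj x y :=
          ⟨u.1, rfl, b, rfl, h1⟩
        have E13 : ∃ x ∈ ({u.1} : Set V), ∃ y ∈ {x | x ∈ q3.support}, G.Adj x y :=
          ⟨u.1, rfl, d, hdT, h2⟩
        have E23 : ∃ x ∈ ({b} : Set V), ∃ y ∈ {x | x ∈ q3.support}, G.Adj x y :=
          ⟨b, rfl, c, hcT, h3⟩
        have symm : ∀ (X Y : Set V), (∃ x ∈ X, ∃ y ∈ Y, G.Adj x y) →
            ∃ x ∈ Y, ∃ y ∈ X, G.Adj x y := by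
          rintro X Y ⟨x, hx, y, hy, hxy⟩; exact ⟨y, hy, x, hx, hxy.symm⟩
        intro w w' hadj
        have hne : w ≠ w' := hadj.ne
        fin_cases w <;> fin_cases w' <;>
          first
            | exact absurd rfl hne
            | exact E01 | exact E02 | exact E03 | exact E12 | exact E13 | exact E23
            | exact symm _ _ E01 | exact symm _ _ E02 | exact symm _ _ E03
            | exact symm _ _ E12 | exact symm _ _ E13 | exact symm _ _ E23
    · -- degree
      intro v
      by_contra hdeg
      push_neg at hdeg
      obtain ⟨a, ha, b, hb, c, hc, hab, hac, hbc⟩ :=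
        (Set.two_lt_ncard (Set.toFinite _)).mp hdeg
      have hva : G.Adj v.1 a.1 := ha
      have hvb : G.Adj v.1 b.1 := hb
      have hvc : G.Adj v.1 c.1 := hc
      have hab' : a.1 ≠ b.1 := fun h => hab (Subtype.ext h)
      have hac' : a.1 ≠ c.1 := fun h => hac (Subtype.ext h)
      have hbc' : b.1 ≠ c.1 := fun h => hbc (Subtype.ext h)
      refine hop.2 ⟨(fun w : Fin 2 ⊕ Fin 3 => match w with
        | Sum.inl 0 => {v.1} | Sum.inl 1 => B
        | Sum.inr 0 => {a.1} | Sum.inr 1 => {b.1} | Sum.inr 2 => {c.1}), ?_, ?_, ?_⟩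
      · rintro (w | w)
        · fin_cases w
          · exact singleton_connected G v.1
          · exact ball_connected hG r n
        · fin_cases w
          · exact singleton_connected G a.1
          · exact singleton_connected G b.1
          · exact singleton_connected G c.1
      · have hDB : ∀ x : V, x ∈ S → Disjoint B {x} := by
          intro x hx
          rw [Set.disjoint_right]; rintro y rfl hy; exact hBS _ hy _ hx rfl
        have dsing : ∀ x y : V, x ≠ y → Disjoint ({x} : Set V) {y} := by
          intro x y h; rwa [Set.disjoint_singleton]
        rintro (w | w) (w' | w') hne <;> fin_cases w <;> fin_cases w' <;>
          first
            | exact absurd rfl hne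
            | exact hDB v.1 v.2 | exact (hDB v.1 v.2).symm
            | exact hDB a.1 a.2 | exact (hDB a.1 a.2).symm
            | exact hDB b.1 b.2 | exact (hDB b.1 b.2).symm
            | exact hDB c.1 c.2 | exact (hDB c.1 c.2).symm
            | exact dsing _ _ hva.ne | exact dsing _ _ hva.ne.symm
            | exact dsing _ _ hvb.ne | exact dsing _ _ hvb.ne.symm
            | exact dsing _ _ hvc.ne | exact dsing _ _ hvc.ne.symm
            | exact dsing _ _ hab' | exact dsing _ _ hab'.symm
            | exact dsing _ _ hac' | exact dsing _ _ hac'.symm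
            | exact dsing _ _ hbc' | exact dsing _ _ hbc'.symm
      · have symm : ∀ (X Y : Set V), (∃ x ∈ X, ∃ y ∈ Y, G.Adj x y) →
            ∃ x ∈ Y, ∃ y ∈ X, G.Adj x y := by
          rintro X Y ⟨x, hx, y, hy, hxy⟩; exact ⟨y, hy, x, hx, hxy.symm⟩
        have Eva : ∃ x ∈ ({v.1} : Set V), ∃ y ∈ ({a.1} : Set V), G.Adj x y :=
          ⟨v.1, rfl, a.1, rfl, hva⟩
        have Evb : ∃ x ∈ ({v.1} : Set V), ∃ y ∈ ({b.1} : Set V), G.Adj x y :=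
          ⟨v.1, rfl, b.1, rfl, hvb⟩
        have Evc : ∃ x ∈ ({v.1} : Set V), ∃ y ∈ ({c.1} : Set V), G.Adj x y :=
          ⟨v.1, rfl, c.1, rfl, hvc⟩
        have EB : ∀ x : V, x ∈ S → ∃ z ∈ B, ∃ y ∈ ({x} : Set V), G.Adj z y := by
          intro x hx; obtain ⟨z, hz1, hz2⟩ := hBadj x hx; exact ⟨z, hz1, x, rfl, hz2⟩
        rintro (w | w) (w' | w') hadj
        · exact absurd hadj (by simp)
        · fin_cases w <;> fin_cases w'
          · exact Eva
          · exact Evb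
          · exact Evc
          · exact EB a.1 a.2
          · exact EB b.1 b.2
          · exact EB c.1 c.2
        · fin_cases w <;> fin_cases w'
          · exact symm _ _ Eva
          · exact symm _ _ (EB a.1 a.2)
          · exact symm _ _ Evb
          · exact symm _ _ (EB b.1 b.2)
          · exact symm _ _ Evc
          · exact symm _ _ (EB c.1 c.2)
        · exact absurd hadj (by simp)
end

section
/- Let G be a graph and let 𝒫 be a partition of V(G) of layered width ℓ with respect to a layering (V_0, V_1, …), such that the quotient graph G/𝒫 has a p-centered coloring with c colors. Then G has a p-centered coloring with at most ℓ·(p+1)·c colors. -/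
/-- A vertex coloring `φ` of a graph `G` is `p`-centered if for every connected subgraph `H`
of `G`, either `φ` uses more than `p` colors on `H` or some color appears exactly once on `H`. -/
def IsPCentered {V C : Type*} (G : SimpleGraph V) (p : ℕ) (φ : V → C) : Prop :=
  ∀ H : G.Subgraph, H.Connected →
    p < (φ '' H.verts).ncard ∨ ∃ c : C, {v ∈ H.verts | φ v = c}.ncard = 1

lemma isPCentered_comp {V C D : Type*} (G : SimpleGraph V) (p : ℕ) (φ : V → C) (e : C → D)
    (he : Function.Injective e) (h : IsPCentered G p φ) : IsPCentered G p (e ∘ φ) := by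
  intro H hH
  rcases h H hH with h1 | ⟨c0, hc0⟩
  · left
    rwa [Set.image_comp, Set.ncard_image_of_injective _ he]
  · right
    refine ⟨e c0, ?_⟩
    have : {v ∈ H.verts | (e ∘ φ) v = e c0} = {v ∈ H.verts | φ v = c0} := by
      ext v; simp [he.eq_iff]
    rw [this]; exact hc0

/-- along a walk in a subgraph, the layering takes every intermediate value -/
lemma walk_layer_between {V : Type*} {G : SimpleGraph V} {H : G.Subgraph} (L : V → ℕ)
    (hL : ∀ ⦃u v : V⦄, G.Adj u v → L u ≤ L v + 1 ∧ L v ≤ L u + 1) :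
    ∀ {x y : H.verts} (_ : H.coe.Walk x y) (i : ℕ), L x ≤ i → i ≤ L y →
      ∃ z ∈ H.verts, L z = i := by
  intro x y w
  induction w with
  | @nil a =>
    intro i h1 h2
    exact ⟨a, a.2, by omega⟩
  | @cons a b d h w ih =>
    intro i h1 h2
    by_cases hb : L (b : V) ≤ i
    · exact ih i hb h2
    · push_neg at hb
      have hadj : G.Adj (a : V) (b : V) := H.adj_sub ((SimpleGraph.Subgraph.coe_adj H a b).mp h)
      have := hL hadj
      refine ⟨a, a.2, ?_⟩
      omega

/-- Let `𝒫` (given by the part map `P : V → ι`) be a partition of `V(G)` of layered width `ℓ`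
with respect to a layering `L` (every edge joins vertices in the same or consecutive layers,
and each part meets each layer in at most `ℓ` vertices). If the quotient graph `Q`
(distinct parts adjacent iff joined by an edge of `G`) has a `p`-centered coloring with `c`
colors, then `G` has a `p`-centered coloring with at most `ℓ·(p+1)·c` colors. -/
theorem pCentered_of_quotient {V ι : Type*} [Fintype V] [Fintype ι]
    (G : SimpleGraph V) (p ℓ c : ℕ)
    (P : V → ι) (L : V → ℕ)
    (hL : ∀ ⦃u v : V⦄, G.Adj u v → L u ≤ L v + 1 ∧ L v ≤ L u + 1)
    (hwidth : ∀ (a : ι) (i : ℕ), {v : V | P v = a ∧ L v = i}.ncard ≤ ℓ)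
    (Q : SimpleGraph ι)
    (hQ : ∀ a b : ι, Q.Adj a b ↔ a ≠ b ∧ ∃ u v : V, P u = a ∧ P v = b ∧ G.Adj u v)
    (ψ : ι → Fin c) (hψ : IsPCentered Q p ψ) :
    ∃ φ : V → Fin (ℓ * (p + 1) * c), IsPCentered G p φ := by
  classical
  -- an injective "rank" within each (part, layer) cell
  let ord : V → ℕ := fun v => ((Fintype.equivFin V) v : ℕ)
  have hord : Function.Injective ord := fun a b h =>
    (Fintype.equivFin V).injective (Fin.ext h)
  let r : V → ℕ := fun v => {w | P w = P v ∧ L w = L v ∧ ord w < ord v}.ncard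
  have hr_lt : ∀ v, r v < ℓ := by
    intro v
    have hnot : v ∉ {w | P w = P v ∧ L w = L v ∧ ord w < ord v} := by
      simp
    have h1 : (insert v {w | P w = P v ∧ L w = L v ∧ ord w < ord v}).ncard = r v + 1 :=
      Set.ncard_insert_of_notMem hnot (Set.toFinite _)
    have hsub : insert v {w | P w = P v ∧ L w = L v ∧ ord w < ord v} ⊆
        {w | P w = P v ∧ L w = L v} := by
      rintro w (rfl | ⟨h1, h2, h3⟩)
      · exact ⟨rfl, rfl⟩
      · exact ⟨h1, h2⟩
    have := (Set.ncard_le_ncard hsub (Set.toFinite _)).trans (hwidth (P v) (L v))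
    omega
  have hr_inj : ∀ u v : V, P u = P v → L u = L v → r u = r v → u = v := by
    have haux : ∀ u v : V, P u = P v → L u = L v → ord u < ord v → r u < r v := by
      intro u v hP hLuv hlt
      have hnot : u ∉ {w | P w = P u ∧ L w = L u ∧ ord w < ord u} := by simp
      have h1 : (insert u {w | P w = P u ∧ L w = L u ∧ ord w < ord u}).ncard = r u + 1 :=
        Set.ncard_insert_of_notMem hnot (Set.toFinite _)
      have hsub : insert u {w | P w = P u ∧ L w = L u ∧ ord w < ord u} ⊆
          {w | P w = P v ∧ L w = L v ∧ ord w < ord v} := by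
        rintro w (rfl | ⟨ha, hb, hc⟩)
        · exact ⟨hP, hLuv, hlt⟩
        · exact ⟨ha.trans hP, hb.trans hLuv, hc.trans hlt⟩
      have := Set.ncard_le_ncard hsub (Set.toFinite _)
      have : r u + 1 ≤ r v := h1 ▸ this
      omega
    intro u v hP hLuv hr
    rcases Nat.lt_trichotomy (ord u) (ord v) with h | h | h
    · exact absurd hr (Nat.ne_of_lt (haux u v hP hLuv h))
    · exact hord h
    · exact absurd hr.symm (Nat.ne_of_lt (haux v u hP.symm hLuv.symm h))
  -- the coloring
  let φ' : V → Fin c × Fin (p + 1) × Fin ℓ := fun v =>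
    (ψ (P v), ⟨L v % (p + 1), Nat.mod_lt _ (Nat.succ_pos p)⟩, ⟨r v, hr_lt v⟩)
  have hcard : Fintype.card (Fin c × Fin (p + 1) × Fin ℓ) = ℓ * (p + 1) * c := by
    simp [Fintype.card_prod]; ring
  let e : Fin c × Fin (p + 1) × Fin ℓ ≃ Fin (ℓ * (p + 1) * c) :=
    Fintype.equivFinOfCardEq hcard
  refine ⟨(e : _ → _) ∘ φ', isPCentered_comp G p φ' e e.injective ?_⟩
  -- main claim: φ' is p-centered
  intro H hH
  by_cases hbig : p < (φ' '' H.verts).ncard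
  · exact Or.inl hbig
  push_neg at hbig
  right
  have hpre : H.coe.Preconnected := hH.coe.preconnected
  -- layers of H span at most p+1 values
  have hdiff : ∀ u ∈ H.verts, ∀ v ∈ H.verts, L v ≤ L u + p := by
    intro u hu v hv
    by_contra hcon
    push_neg at hcon
    -- second-coordinate image
    have hmem : ∀ k : ℕ, k ≤ p → ∃ w ∈ H.verts, L w = L u + k := by
      intro k hk
      obtain ⟨w⟩ := hpre ⟨u, hu⟩ ⟨v, hv⟩
      exact walk_layer_between L hL w (L u + k) (by show L u ≤ L u + k; omega)
        (by show L u + k ≤ L v; omega)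
    have hle : p + 1 ≤ ((fun x : Fin c × Fin (p + 1) × Fin ℓ => x.2.1) '' (φ' '' H.verts)).ncard := by
      have : (↑(Finset.Iio (p + 1)) : Set ℕ).ncard ≤
          ((fun x : Fin c × Fin (p + 1) × Fin ℓ => x.2.1) '' (φ' '' H.verts)).ncard := by
        apply Set.ncard_le_ncard_of_injOn
          (fun k => (⟨(L u + k) % (p + 1), Nat.mod_lt _ (Nat.succ_pos p)⟩ : Fin (p + 1)))
        · intro k hk
          simp only [Finset.coe_Iio, Set.mem_Iio] at hk
          obtain ⟨w, hw, hLw⟩ := hmem k (by omega)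
          refine ⟨φ' w, ⟨w, hw, rfl⟩, ?_⟩
          apply Fin.ext
          show L w % (p + 1) = (L u + k) % (p + 1)
          rw [hLw]
        · intro k1 h1 k2 h2 heq
          simp only [Finset.coe_Iio, Set.mem_Iio] at h1 h2
          have hmodeq : (L u + k1) % (p + 1) = (L u + k2) % (p + 1) := congrArg Fin.val heq
          have : k1 % (p + 1) = k2 % (p + 1) := Nat.ModEq.add_left_cancel' (L u) hmodeq
          rwa [Nat.mod_eq_of_lt h1, Nat.mod_eq_of_lt h2] at this
      rwa [Set.ncard_coe_finset, Nat.card_Iio] at this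
    have hle2 : ((fun x : Fin c × Fin (p + 1) × Fin ℓ => x.2.1) '' (φ' '' H.verts)).ncard ≤ p :=
      le_trans (Set.ncard_image_le (Set.toFinite _)) hbig
    omega
  -- layer is determined by its residue, within H
  have hmodinj : ∀ u ∈ H.verts, ∀ v ∈ H.verts, L u % (p + 1) = L v % (p + 1) → L u = L v := by
    have key : ∀ u ∈ H.verts, ∀ v ∈ H.verts, L u ≤ L v →
        L u % (p + 1) = L v % (p + 1) → L u = L v := by
      intro u hu v hv hle hmod
      have hdvd : (p + 1) ∣ L v - L u := (Nat.modEq_iff_dvd' hle).mp hmod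
      have hlt : L v - L u < p + 1 := by
        have := hdiff u hu v hv
        omega
      rcases Nat.eq_zero_or_pos (L v - L u) with h | h
      · omega
      · exact absurd (Nat.eq_zero_of_dvd_of_lt hdvd hlt) (by omega)
    intro u hu v hv hmod
    rcases le_total (L u) (L v) with h | h
    · exact key u hu v hv h hmod
    · exact (key v hv u hu h hmod.symm).symm
  -- the quotient subgraph
  let H' : Q.Subgraph :=
  { verts := P '' H.verts
    Adj := fun a b => a ≠ b ∧ ∃ x y : V, x ∈ H.verts ∧ y ∈ H.verts ∧ P x = a ∧ P y = b ∧ H.Adj x y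
    adj_sub := by
      rintro a b ⟨hne, x, y, hx, hy, rfl, rfl, hxy⟩
      exact (hQ _ _).mpr ⟨hne, x, y, rfl, rfl, H.adj_sub hxy⟩
    edge_vert := by
      rintro a b ⟨hne, x, y, hx, hy, rfl, rfl, hxy⟩
      exact ⟨x, hx, rfl⟩
    symm := by
      constructor
      rintro a b ⟨hne, x, y, hx, hy, ha, hb, hxy⟩
      exact ⟨hne.symm, y, x, hy, hx, hb, ha, hxy.symm⟩ }
  have hH'v : H'.verts = P '' H.verts := rfl
  -- H' is connected
  have hkey : ∀ (x y : H.verts) (_ : H.coe.Walk x y),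
      H'.coe.Reachable ⟨P x, ⟨x, x.2, rfl⟩⟩ ⟨P y, ⟨y, y.2, rfl⟩⟩ := by
    intro x y w
    induction w with
    | nil => exact SimpleGraph.Reachable.refl _
    | @cons a b d h w ih =>
      by_cases heq : P (a : V) = P (b : V)
      · have : (⟨P (a : V), ⟨a, a.2, rfl⟩⟩ : H'.verts) = ⟨P (b : V), ⟨b, b.2, rfl⟩⟩ :=
          Subtype.ext heq
        rw [this]; exact ih
      · refine SimpleGraph.Reachable.trans ?_ ih
        apply SimpleGraph.Adj.reachable
        have hadj : H'.Adj (P (a : V)) (P (b : V)) :=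
          ⟨heq, a, b, a.2, b.2, rfl, rfl, (SimpleGraph.Subgraph.coe_adj H a b).mp h⟩
        exact hadj
  have hH'conn : H'.Connected := by
    rw [SimpleGraph.Subgraph.connected_iff]
    constructor
    · rw [SimpleGraph.Subgraph.preconnected_iff]
      rintro ⟨a, ha⟩ ⟨b, hb⟩
      obtain ⟨x, hx, rfl⟩ := ha
      obtain ⟨y, hy, rfl⟩ := hb
      obtain ⟨w⟩ := hpre ⟨x, hx⟩ ⟨y, hy⟩
      exact hkey ⟨x, hx⟩ ⟨y, hy⟩ w
    · obtain ⟨x, hx⟩ := hH.nonempty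
      exact ⟨P x, x, hx, rfl⟩
  -- ψ uses at most p colors on H'
  have hψsmall : (ψ '' H'.verts).ncard ≤ p := by
    have h1 : ψ '' H'.verts = Prod.fst '' (φ' '' H.verts) := by
      rw [hH'v, Set.image_image, Set.image_image]
    rw [h1]
    exact le_trans (Set.ncard_image_le (Set.toFinite _)) hbig
  rcases hψ H' hH'conn with h | ⟨cc, hcc⟩
  · omega
  obtain ⟨A, hA⟩ := Set.ncard_eq_one.mp hcc
  have hAmem : A ∈ {a ∈ H'.verts | ψ a = cc} := hA ▸ rfl
  obtain ⟨⟨u₀, hu₀, hPu₀⟩, hψA⟩ := hAmem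
  refine ⟨φ' u₀, ?_⟩
  have : {v ∈ H.verts | φ' v = φ' u₀} = {u₀} := by
    ext v
    simp only [Set.mem_setOf_eq, Set.mem_singleton_iff]
    constructor
    · rintro ⟨hv, heq⟩
      have h1 : ψ (P v) = ψ (P u₀) := congrArg Prod.fst heq
      have h2 : L v % (p + 1) = L u₀ % (p + 1) := congrArg (fun x => (x.2.1 : ℕ)) heq
      have h3 : r v = r u₀ := congrArg (fun x => (x.2.2 : ℕ)) heq
      have hPv : P v = A := by
        have : P v ∈ {a ∈ H'.verts | ψ a = cc} := by
          refine ⟨⟨v, hv, rfl⟩, ?_⟩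
          rw [h1, hPu₀, hψA]
        rw [hA] at this
        exact this
      have hLv : L v = L u₀ := hmodinj v hv u₀ hu₀ h2
      exact hr_inj v u₀ (hPv.trans hPu₀.symm) hLv h3
    · rintro rfl
      exact ⟨hu₀, rfl⟩
  rw [this, Set.ncard_singleton]
end

section
/- If G⁺ is obtained from a graph G by adding a universal vertex (a new vertex adjacent to all vertices of G), then stw(G⁺) = stw(G) + 1, where stw denotes simple treewidth. In particular, adding an apex vertex increases the treewidth of a graph by exactly one: tw(G⁺) = tw(G) + 1. -/
/-- A tree-decomposition of a graph `G`: a tree together with bags indexed by its nodes,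
covering all vertices and edges, such that the set of nodes whose bag contains any given
vertex induces a (nonempty, by `vert_cover`) subtree. -/
structure TreeDecomp {V : Type} (G : SimpleGraph V) where
  ι : Type
  tree : SimpleGraph ι
  tree_connected : tree.Connected
  tree_acyclic : tree.IsAcyclic
  bag : ι → Set V
  vert_cover : ∀ v : V, ∃ t : ι, v ∈ bag t
  edge_cover : ∀ ⦃u v : V⦄, G.Adj u v → ∃ t : ι, u ∈ bag t ∧ v ∈ bag t
  bag_subtree : ∀ v : V, (tree.induce {t : ι | v ∈ bag t}).Preconnected

/-- `G` has a tree-decomposition of width at most `k` (all bags of size at most `k+1`). -/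
def HasTreewidthLE {V : Type} (G : SimpleGraph V) (k : ℕ) : Prop :=
  ∃ D : TreeDecomp G, ∀ t, (D.bag t).ncard ≤ k + 1

/-- `G` has a `k`-simple tree-decomposition: width at most `k`, and every set of exactly
`k` vertices is contained in at most two distinct bags. -/
def HasSimpleTreewidthLE {V : Type} (G : SimpleGraph V) (k : ℕ) : Prop :=
  ∃ D : TreeDecomp G, (∀ t, (D.bag t).ncard ≤ k + 1) ∧
    ∀ X : Set V, X.ncard = k →
      ∀ t₁ t₂ t₃ : D.ι, X ⊆ D.bag t₁ → X ⊆ D.bag t₂ → X ⊆ D.bag t₃ →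
        t₁ = t₂ ∨ t₁ = t₃ ∨ t₂ = t₃

/-- The treewidth of `G`. -/
noncomputable def treewidth {V : Type} (G : SimpleGraph V) : ℕ :=
  sInf {k | HasTreewidthLE G k}

/-- The simple treewidth of `G`. -/
noncomputable def simpleTreewidth {V : Type} (G : SimpleGraph V) : ℕ :=
  sInf {k | HasSimpleTreewidthLE G k}

/-- The graph obtained from `G` by adding a new universal (apex) vertex, adjacent to all
vertices of `G`. -/
def addUniversal {V : Type} (G : SimpleGraph V) : SimpleGraph (Option V) :=
  SimpleGraph.fromRel (fun x y =>
    x = none ∨ ∃ u v : V, x = some u ∧ y = some v ∧ G.Adj u v)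

open SimpleGraph Set

section Aux

variable {α : Type}

lemma reachable_induce {G : SimpleGraph α} {s : Set α} {a b : α} (w : G.Walk a b)
    (hw : ∀ x ∈ w.support, x ∈ s) (ha : a ∈ s) (hb : b ∈ s) :
    (G.induce s).Reachable ⟨a, ha⟩ ⟨b, hb⟩ := by
  induction w with
  | nil => rfl
  | @cons a d b h w ih =>
    have hd : d ∈ s := hw d (by simp)
    have h1 : (G.induce s).Adj ⟨a, ha⟩ ⟨d, hd⟩ := h
    exact h1.reachable.trans (ih (fun x hx => hw x (by simp [hx])) hd hb)

lemma walk_lift {G : SimpleGraph α} {s : Set α} {a b : α} (w : G.Walk a b)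
    (hw : ∀ x ∈ w.support, x ∈ s) (ha : a ∈ s) (hb : b ∈ s) :
    ∃ w' : (G.induce s).Walk ⟨a, ha⟩ ⟨b, hb⟩, ∀ x ∈ w'.support, (x : α) ∈ w.support := by
  induction w with
  | nil => exact ⟨Walk.nil, by simp⟩
  | @cons a d b h w ih =>
    have hd : d ∈ s := hw d (by simp)
    obtain ⟨w', hw'⟩ := ih (fun x hx => hw x (by simp [hx])) hd hb
    refine ⟨Walk.cons (by exact h) w', ?_⟩
    intro x hx
    replace hx : x ∈ (⟨a, ha⟩ :: w'.support : List _) := hx; rw [List.mem_cons] at hx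
    rcases hx with rfl | hx
    · simp
    · simp [hw' x hx]

lemma path_eq {G : SimpleGraph α} (hG : G.IsAcyclic) {a b : α} {p q : G.Walk a b}
    (hp : p.IsPath) (hq : q.IsPath) : p = q := by
  have := isAcyclic_iff_path_unique.mp hG ⟨p, hp⟩ ⟨q, hq⟩
  exact congrArg Subtype.val this

lemma exists_path_in {G : SimpleGraph α} {s : Set α}
    (hs : (G.induce s).Preconnected) {a b : α} (ha : a ∈ s) (hb : b ∈ s) :
    ∃ w : G.Walk a b, w.IsPath ∧ ∀ x ∈ w.support, x ∈ s := by
  classical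
  obtain ⟨w⟩ := hs ⟨a, ha⟩ ⟨b, hb⟩
  let w₂ : G.Walk a b := w.map (SimpleGraph.Embedding.induce s).toHom
  refine ⟨w₂.bypass, w₂.bypass_isPath, fun x hx => ?_⟩
  have hx2 := w₂.support_bypass_subset hx
  rw [show w₂.support = w.support.map _ from Walk.support_map _ _] at hx2
  obtain ⟨y, _, rfl⟩ := List.mem_map.mp hx2
  exact y.2

lemma induce_acyclic {G : SimpleGraph α} (h : G.IsAcyclic) (s : Set α) :
    (G.induce s).IsAcyclic := by
  intro x c hc
  exact h _ ((Walk.map_isCycle_iff_of_injective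
    (f := (SimpleGraph.Embedding.induce s).toHom) (Subtype.val_injective)).mpr hc)

lemma branch {G : SimpleGraph α} (hG : G.IsAcyclic) {a c : α} (q : G.Walk a c) :
    ∀ {b : α} (p : G.Walk a b), p.IsPath → q.IsPath →
    ∃ (m : α) (p' : G.Walk m b) (q' : G.Walk m c), p'.IsPath ∧ q'.IsPath ∧
      (∀ x ∈ p'.support, x ∈ p.support) ∧ (∀ x ∈ q'.support, x ∈ q.support) ∧
      (∀ x ∈ p'.support, x ∈ q'.support → x = m) := by
  classical
  induction q with
  | nil =>
    intro b p hp _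
    refine ⟨_, p, Walk.nil, hp, Walk.IsPath.nil, fun x hx => hx, fun x hx => hx, ?_⟩
    intro x _ hx
    simpa using hx
  | @cons a d c h q₀ ih =>
    intro b p hp hq
    rw [Walk.cons_isPath_iff] at hq
    by_cases hd : d ∈ p.support
    · obtain ⟨m, p', q', h1, h2, h3, h4, h5⟩ := ih (p.dropUntil d hd) (hp.dropUntil hd) hq.1
      refine ⟨m, p', q', h1, h2, ?_, ?_, h5⟩
      · exact fun x hx => p.support_dropUntil_subset hd (h3 x hx)
      · intro x hx
        rw [Walk.support_cons, List.mem_cons]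
        exact Or.inr (h4 x hx)
    · refine ⟨a, p, Walk.cons h q₀, hp, Walk.cons_isPath_iff h q₀ |>.mpr hq, fun x hx => hx,
        fun x hx => hx, ?_⟩
      intro x hxp hxq
      rw [Walk.support_cons, List.mem_cons] at hxq
      rcases hxq with rfl | hxq₀
      · rfl
      · exfalso
        have hP1 : (p.takeUntil x hxp).IsPath := hp.takeUntil hxp
        have hP2 : (Walk.cons h (q₀.takeUntil x hxq₀)).IsPath := by
          rw [Walk.cons_isPath_iff]
          exact ⟨hq.1.takeUntil hxq₀, fun ha => hq.2 (q₀.support_takeUntil_subset hxq₀ ha)⟩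
        have heq := path_eq hG hP1 hP2
        have hdP1 : d ∈ (p.takeUntil x hxp).support := by
          rw [heq, Walk.support_cons]
          exact List.mem_cons_of_mem _ (Walk.start_mem_support _)
        exact hd (p.support_takeUntil_subset hxp hdP1)

lemma median {G : SimpleGraph α} (hG : G.IsAcyclic) {a b c : α}
    (p : G.Walk a b) (q : G.Walk a c) (s : G.Walk b c)
    (hp : p.IsPath) (hq : q.IsPath) (hs : s.IsPath) :
    ∃ m, m ∈ p.support ∧ m ∈ q.support ∧ m ∈ s.support := by
  obtain ⟨m, p', q', hp', hq', hsub1, hsub2, hdisj⟩ := branch hG q p hp hq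
  have hmq' : m ∉ q'.support.tail := by
    have := hq'.support_nodup
    rw [q'.support_eq_cons] at this
    exact (List.nodup_cons.mp this).1
  have hw : (p'.reverse.append q').IsPath := by
    rw [Walk.isPath_def, Walk.support_append, Walk.support_reverse]
    refine List.Nodup.append (List.nodup_reverse.mpr hp'.support_nodup) ?_ ?_
    · exact hq'.support_nodup.tail
    · intro x hx1 hx2
      rw [List.mem_reverse] at hx1
      exact hmq' ((hdisj x hx1 (List.mem_of_mem_tail hx2)) ▸ hx2)
  have heq : p'.reverse.append q' = s := path_eq hG hw hs
  refine ⟨m, hsub1 m p'.start_mem_support, hsub2 m q'.start_mem_support, ?_⟩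
  rw [← heq, Walk.mem_support_append_iff]
  left
  rw [Walk.support_reverse, List.mem_reverse]
  exact p'.start_mem_support

lemma helly {G : SimpleGraph α} (hG : G.IsAcyclic) {S₁ S₂ S₃ : Set α}
    (h1 : (G.induce S₁).Preconnected) (h2 : (G.induce S₂).Preconnected)
    (h3 : (G.induce S₃).Preconnected) {a b c : α}
    (ha : a ∈ S₁ ∧ a ∈ S₂) (hb : b ∈ S₁ ∧ b ∈ S₃) (hc : c ∈ S₂ ∧ c ∈ S₃) :
    ∃ m, m ∈ S₁ ∧ m ∈ S₂ ∧ m ∈ S₃ := by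
  obtain ⟨p, hp, hpS⟩ := exists_path_in h1 ha.1 hb.1
  obtain ⟨q, hq, hqS⟩ := exists_path_in h2 ha.2 hc.1
  obtain ⟨s, hs, hsS⟩ := exists_path_in h3 hb.2 hc.2
  obtain ⟨m, hm1, hm2, hm3⟩ := median hG p q s hp hq hs
  exact ⟨m, hpS m hm1, hqS m hm2, hsS m hm3⟩

end Aux

section Apex

variable {V : Type} {G : SimpleGraph V}

lemma adj_none_some (G : SimpleGraph V) (v : V) : (addUniversal G).Adj none (some v) := by
  rw [addUniversal, SimpleGraph.fromRel_adj]
  exact ⟨by simp, Or.inl (Or.inl rfl)⟩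

lemma adj_some_some (G : SimpleGraph V) {u v : V} (h : G.Adj u v) :
    (addUniversal G).Adj (some u) (some v) := by
  rw [addUniversal, SimpleGraph.fromRel_adj]
  exact ⟨by simp [h.ne], Or.inl (Or.inr ⟨u, v, rfl, rfl, h⟩)⟩

lemma adj_cases {x y : Option V} (h : (addUniversal G).Adj x y) :
    (∃ u v : V, x = some u ∧ y = some v ∧ G.Adj u v) ∨ x = none ∨ y = none := by
  rw [addUniversal, SimpleGraph.fromRel_adj] at h
  obtain ⟨hne, h | h⟩ := h
  · rcases h with h | ⟨u, v, hx, hy, huv⟩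
    · exact Or.inr (Or.inl h)
    · exact Or.inl ⟨u, v, hx, hy, huv⟩
  · rcases h with h | ⟨u, v, hy, hx, huv⟩
    · exact Or.inr (Or.inr h)
    · exact Or.inl ⟨v, u, hx, hy, huv.symm⟩

/-- The tree-decomposition of `G⁺` obtained by adding `none` to every bag. -/
def upD (D : TreeDecomp G) : TreeDecomp (addUniversal G) where
  ι := D.ι
  tree := D.tree
  tree_connected := D.tree_connected
  tree_acyclic := D.tree_acyclic
  bag := fun t => insert none (some '' D.bag t)
  vert_cover := by
    intro v
    cases v with
    | none =>
      obtain ⟨t⟩ := D.tree_connected.nonempty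
      exact ⟨t, mem_insert _ _⟩
    | some v =>
      obtain ⟨t, ht⟩ := D.vert_cover v
      exact ⟨t, mem_insert_of_mem _ ⟨v, ht, rfl⟩⟩
  edge_cover := by
    intro x y hxy
    rcases adj_cases hxy with ⟨u, v, rfl, rfl, huv⟩ | hx | hy
    · obtain ⟨t, h1, h2⟩ := D.edge_cover huv
      exact ⟨t, mem_insert_of_mem _ ⟨u, h1, rfl⟩, mem_insert_of_mem _ ⟨v, h2, rfl⟩⟩
    · subst hx
      cases y with
      | none => exact absurd rfl hxy.ne
      | some v =>
        obtain ⟨t, ht⟩ := D.vert_cover v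
        exact ⟨t, mem_insert _ _, mem_insert_of_mem _ ⟨v, ht, rfl⟩⟩
    · subst hy
      cases x with
      | none => exact absurd rfl hxy.ne
      | some v =>
        obtain ⟨t, ht⟩ := D.vert_cover v
        exact ⟨t, mem_insert_of_mem _ ⟨v, ht, rfl⟩, mem_insert _ _⟩
  bag_subtree := by
    intro v
    cases v with
    | none =>
      rintro ⟨x, hx⟩ ⟨y, hy⟩
      obtain ⟨w⟩ := D.tree_connected.preconnected x y
      exact reachable_induce w (fun z _ => mem_insert _ _) hx hy
    | some v =>
      have hset : {t | some v ∈ insert none (some '' D.bag t)} = {t | v ∈ D.bag t} := by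
        ext t
        simp
      rw [show {t | (some v : Option V) ∈ insert none (some '' D.bag t)} = {t | v ∈ D.bag t}
        from hset]
      exact D.bag_subtree v

/-- The tree-decomposition of `G` obtained by restricting to the subtree of bags
containing `none` and deleting `none` from them. -/
def downD (D : TreeDecomp (addUniversal G)) : TreeDecomp G where
  ι := {t : D.ι // none ∈ D.bag t}
  tree := D.tree.induce {t | none ∈ D.bag t}
  tree_connected := by
    have hne : Nonempty {t : D.ι // none ∈ D.bag t} := by
      obtain ⟨t, ht⟩ := D.vert_cover none
      exact ⟨⟨t, ht⟩⟩
    exact ⟨D.bag_subtree none⟩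
  tree_acyclic := induce_acyclic D.tree_acyclic _
  bag := fun t => {v | some v ∈ D.bag t.1}
  vert_cover := by
    intro v
    obtain ⟨t, h1, h2⟩ := D.edge_cover (adj_none_some G v)
    exact ⟨⟨t, h1⟩, h2⟩
  edge_cover := by
    intro u v huv
    obtain ⟨a, hau, hav⟩ := D.edge_cover (adj_some_some G huv)
    obtain ⟨b, hb0, hbu⟩ := D.edge_cover (adj_none_some G u)
    obtain ⟨c, hc0, hcv⟩ := D.edge_cover (adj_none_some G v)
    obtain ⟨m, hm1, hm2, hm3⟩ := helly D.tree_acyclic (D.bag_subtree (some u))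
      (D.bag_subtree (some v)) (D.bag_subtree none) ⟨hau, hav⟩ ⟨hbu, hb0⟩ ⟨hcv, hc0⟩
    exact ⟨⟨m, hm3⟩, hm1, hm2⟩
  bag_subtree := by
    intro v
    rintro ⟨⟨t₁, ht₁0⟩, ht₁v⟩ ⟨⟨t₂, ht₂0⟩, ht₂v⟩
    obtain ⟨p, hp, hpS⟩ := exists_path_in (D.bag_subtree none) ht₁0 ht₂0
    obtain ⟨q, hq, hqS⟩ := exists_path_in (D.bag_subtree (some v)) ht₁v ht₂v
    cases path_eq D.tree_acyclic hp hq
    obtain ⟨w', hw'⟩ := walk_lift p hpS ht₁0 ht₂0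
    exact reachable_induce w' (fun x hx => hqS _ (hw' x hx)) ht₁v ht₂v

variable [Fintype V]

lemma up_tw {k : ℕ} (h : HasTreewidthLE G k) : HasTreewidthLE (addUniversal G) (k + 1) := by
  obtain ⟨D, hD⟩ := h
  refine ⟨upD D, ?_⟩
  intro t
  simp only [upD]
  calc (insert none (some '' D.bag t)).ncard ≤ (some '' D.bag t).ncard + 1 :=
        Set.ncard_insert_le _ _
    _ = (D.bag t).ncard + 1 := by rw [Set.ncard_image_of_injective _ (Option.some_injective V)]
    _ ≤ k + 1 + 1 := by have := hD t; omega

lemma some_preimage_sub {X : Set (Option V)} {s : Set V}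
    (h : X ⊆ insert none (some '' s)) : {v : V | some v ∈ X} ⊆ s := by
  intro v hv
  rcases Set.mem_insert_iff.mp (h hv) with h' | ⟨w, hw, hww⟩
  · simp at h'
  · rwa [← Option.some_injective V hww]

lemma up_stw {k : ℕ} (h : HasSimpleTreewidthLE G k) :
    HasSimpleTreewidthLE (addUniversal G) (k + 1) := by
  obtain ⟨D, hD, hsimp⟩ := h
  refine ⟨upD D, up_tw ⟨D, hD⟩ |>.choose_spec |> fun _ => ?_, ?_⟩
  · intro t
    simp only [upD]
    calc (insert none (some '' D.bag t)).ncard ≤ (some '' D.bag t).ncard + 1 :=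
          Set.ncard_insert_le _ _
      _ = (D.bag t).ncard + 1 := by rw [Set.ncard_image_of_injective _ (Option.some_injective V)]
      _ ≤ k + 1 + 1 := by have := hD t; omega
  · intro X hX t₁ t₂ t₃ h1 h2 h3
    simp only [upD] at h1 h2 h3 ⊢
    set Y := {v : V | some v ∈ X} with hYdef
    by_cases hn : none ∈ X
    · have himg : some '' Y = X \ {none} := by
        ext x
        cases x with
        | none => simp [hYdef]
        | some w => simp [hYdef]
      have hYcard : Y.ncard = k := by
        have h' : (some '' Y).ncard = Y.ncard :=
          Set.ncard_image_of_injective _ (Option.some_injective V)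
        rw [himg, Set.ncard_diff_singleton_of_mem hn, hX] at h'
        omega
      exact hsimp Y hYcard t₁ t₂ t₃ (some_preimage_sub h1) (some_preimage_sub h2)
        (some_preimage_sub h3)
    · have himg : some '' Y = X := by
        ext x
        cases x with
        | none => simp [hYdef, hn]
        | some w => simp [hYdef]
      have hYcard : Y.ncard = k + 1 := by
        rw [← hX, ← himg, Set.ncard_image_of_injective _ (Option.some_injective V)]
      have heq : ∀ {t : D.ι}, X ⊆ insert none (some '' D.bag t) → D.bag t = Y := by
        intro t ht
        refine (Set.eq_of_subset_of_ncard_le (some_preimage_sub ht) ?_ (Set.toFinite _)).symm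
        rw [hYcard]
        exact hD t
      obtain ⟨Z, hZsub, hZcard⟩ := Set.exists_subset_card_eq (n := k) (s := Y) (by omega)
      refine hsimp Z hZcard t₁ t₂ t₃ ?_ ?_ ?_
      · rw [heq h1]; exact hZsub
      · rw [heq h2]; exact hZsub
      · rw [heq h3]; exact hZsub

lemma down_bag_card {k : ℕ} (D : TreeDecomp (addUniversal G))
    (hD : ∀ t, (D.bag t).ncard ≤ k + 2) (t : {t : D.ι // none ∈ D.bag t}) :
    ({v : V | some v ∈ D.bag t.1}).ncard ≤ k + 1 := by
  have himg : some '' {v : V | some v ∈ D.bag t.1} = D.bag t.1 \ {none} := by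
    ext x
    cases x with
    | none => simp
    | some w => simp
  have h1 : ({v : V | some v ∈ D.bag t.1}).ncard = (D.bag t.1 \ {none}).ncard := by
    rw [← himg, Set.ncard_image_of_injective _ (Option.some_injective V)]
  rw [h1, Set.ncard_diff_singleton_of_mem t.2]
  have := hD t.1
  omega

lemma down_tw {k : ℕ} (h : HasTreewidthLE (addUniversal G) (k + 1)) : HasTreewidthLE G k := by
  obtain ⟨D, hD⟩ := h
  exact ⟨downD D, down_bag_card D (fun t => by have := hD t; omega)⟩

lemma down_stw {k : ℕ} (h : HasSimpleTreewidthLE (addUniversal G) (k + 1)) :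
    HasSimpleTreewidthLE G k := by
  obtain ⟨D, hD, hsimp⟩ := h
  refine ⟨downD D, down_bag_card D (fun t => by have := hD t; omega), ?_⟩
  intro X hX t₁ t₂ t₃ h1 h2 h3
  simp only [downD] at h1 h2 h3 ⊢
  set Y : Set (Option V) := insert none (some '' X) with hYdef
  have hYcard : Y.ncard = k + 1 := by
    rw [hYdef, Set.ncard_insert_of_notMem (by simp) (Set.toFinite _),
      Set.ncard_image_of_injective _ (Option.some_injective V), hX]
  have hsub : ∀ {t : {t : D.ι // none ∈ D.bag t}}, X ⊆ {v : V | some v ∈ D.bag t.1} →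
      Y ⊆ D.bag t.1 := by
    intro t ht x hx
    rcases Set.mem_insert_iff.mp hx with rfl | ⟨w, hw, rfl⟩
    · exact t.2
    · exact ht hw
  rcases hsimp Y hYcard t₁.1 t₂.1 t₃.1 (hsub h1) (hsub h2) (hsub h3) with h | h | h
  · exact Or.inl (Subtype.ext h)
  · exact Or.inr (Or.inl (Subtype.ext h))
  · exact Or.inr (Or.inr (Subtype.ext h))

lemma not_tw_zero [Nonempty V] : ¬ HasTreewidthLE (addUniversal G) 0 := by
  rintro ⟨D, hD⟩
  obtain ⟨v⟩ := ‹Nonempty V›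
  obtain ⟨t, h1, h2⟩ := D.edge_cover (adj_none_some G v)
  have hsub : ({none, some v} : Set (Option V)) ⊆ D.bag t := by
    rintro x (rfl | rfl)
    · exact h1
    · exact h2
  have hle : ({none, some v} : Set (Option V)).ncard ≤ (D.bag t).ncard :=
    Set.ncard_le_ncard hsub (Set.toFinite _)
  rw [Set.ncard_pair (by simp)] at hle
  have := hD t
  omega

/-- The trivial one-bag tree-decomposition. -/
def trivD (G : SimpleGraph V) : TreeDecomp G where
  ι := Unit
  tree := ⊥
  tree_connected := by
    refine ⟨fun x y => ?_⟩
    rw [Subsingleton.elim x y]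
  tree_acyclic := by
    intro x c hc
    cases c with
    | nil => exact hc.ne_nil rfl
    | cons h _ => exact h
  bag := fun _ => Set.univ
  vert_cover := fun v => ⟨(), Set.mem_univ v⟩
  edge_cover := fun u v _ => ⟨(), Set.mem_univ u, Set.mem_univ v⟩
  bag_subtree := by
    intro v x y
    rw [Subsingleton.elim x y]

lemma nonempty_stw [Nonempty V] (G : SimpleGraph V) : ∃ k, HasSimpleTreewidthLE G k := by
  refine ⟨Fintype.card V - 1, trivD G, ?_, ?_⟩
  · intro t
    simp only [trivD]
    rw [Set.ncard_univ, Nat.card_eq_fintype_card]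
    have := Fintype.card_pos (α := V)
    omega
  · intro X hX t₁ t₂ t₃ _ _ _
    exact Or.inl (Subsingleton.elim (α := Unit) t₁ t₂)

end Apex

lemma sInf_shift {P Q : ℕ → Prop} (hne : ∃ k, P k)
    (hup : ∀ k, P k → Q (k + 1)) (hdn : ∀ k, Q (k + 1) → P k) (h0 : ¬ Q 0) :
    sInf {k | Q k} = sInf {k | P k} + 1 := by
  have hPmem : sInf {k | P k} ∈ {k | P k} := Nat.sInf_mem hne
  have hQne : ∃ k, k ∈ {k | Q k} := ⟨_, hup _ hPmem⟩
  have hQmem := Nat.sInf_mem hQne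
  apply le_antisymm
  · exact Nat.sInf_le (hup _ hPmem)
  · rcases h : sInf {k | Q k} with _ | m
    · exact absurd (h ▸ hQmem) h0
    · have h1 : P m := hdn m (h ▸ hQmem)
      have h2 : sInf {k | P k} ≤ m := Nat.sInf_le h1
      omega

/-- Adding a universal (apex) vertex increases simple treewidth by exactly one, and likewise
increases treewidth by exactly one. -/
theorem addUniversal_treewidths {V : Type} [Fintype V] [Nonempty V] (G : SimpleGraph V) :
    simpleTreewidth (addUniversal G) = simpleTreewidth G + 1 ∧
    treewidth (addUniversal G) = treewidth G + 1 := by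
  constructor
  · exact sInf_shift (nonempty_stw G) (fun k => up_stw) (fun k => down_stw)
      (fun h0 => not_tw_zero ⟨h0.choose, h0.choose_spec.1⟩)
  · refine sInf_shift ?_ (fun k => up_tw) (fun k => down_tw) not_tw_zero
    obtain ⟨k, D, hD, _⟩ := nonempty_stw G
    exact ⟨k, D, hD⟩
end
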